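/- arXiv:1103.5255 — 8 statements merged into one kernel-verified Lean document; each statement's English description precedes it below -/
import Mathlib

section
/- Let G be a finite group and V an irreducible representation of G over an algebraically closed field of characteristic zero. Then every solvable G-stable Lie subalgebra of sl(V) is abelian. -/
attribute [local instance 100] LieRing.ofAssociativeRing

/-- A representation is irreducible: `V` is nonzero and the only `G`-stable subspaces are
`⊥` and `⊤`. -/
def Representation.IsIrred {k G V : Type*} [CommSemiring k] [Monoid G]
    [AddCommMonoid V] [Module k V] (ρ : Representation k G V) : Prop :=
  Nontrivial V ∧ ∀ U : Submodule k V, (∀ g : G, ∀ v ∈ U, ρ g v ∈ U) → U = ⊥ ∨ U = ⊤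

/-- A Lie subalgebra of `End(V)` is `G`-stable if it is stable under conjugation by the
representation. -/
def Representation.StableLieSubalgebra {k G V : Type*} [CommRing k] [Group G]
    [AddCommGroup V] [Module k V] (ρ : Representation k G V)
    (L : LieSubalgebra k (Module.End k V)) : Prop :=
  ∀ g : G, ∀ f ∈ L, ρ g * f * ρ g⁻¹ ∈ L

section Aux

variable {k V : Type*} [Field k] [CharZero k] [AddCommGroup V] [Module k V]
  [FiniteDimensional k V]

omit [CharZero k] [FiniteDimensional k V] in
lemma lie_mem_of_mem (x y : Module.End k V) (U : Submodule k V)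
    (hx : ∀ w ∈ U, x w ∈ U) (hy : ∀ w ∈ U, y w ∈ U) :
    ∀ w ∈ U, (⁅x, y⁆ : Module.End k V) w ∈ U := fun w hw => by
  simp only [LieRing.of_associative_ring_bracket, LinearMap.sub_apply, Module.End.mul_apply]
  exact sub_mem (hx _ (hy _ hw)) (hy _ (hx _ hw))

/-- if a bracket of two endos preserving a nonzero subspace `U` acts as `c • id` on `U`,
then `c = 0`. -/
lemma scalar_eq_zero_of_lie (x y : Module.End k V) (U : Submodule k V) (hU : U ≠ ⊥)
    (hx : ∀ w ∈ U, x w ∈ U) (hy : ∀ w ∈ U, y w ∈ U) (c : k)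
    (hscal : ∀ w ∈ U, (⁅x, y⁆ : Module.End k V) w = c • w) : c = 0 := by
  have h2 : (⁅x, y⁆ : Module.End k V).restrict (lie_mem_of_mem x y U hx hy)
      = c • (1 : Module.End k U) := by
    ext w
    simpa [LinearMap.restrict_apply] using hscal w w.2
  have h1 : LinearMap.trace k U ((⁅x, y⁆ : Module.End k V).restrict
      (lie_mem_of_mem x y U hx hy)) = 0 := by
    have : (⁅x, y⁆ : Module.End k V).restrict (lie_mem_of_mem x y U hx hy) =
        (x.restrict hx) * (y.restrict hy) - (y.restrict hy) * (x.restrict hx) := by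
      ext w
      simp [LieRing.of_associative_ring_bracket, LinearMap.restrict_apply]
    rw [this, map_sub, LinearMap.trace_mul_comm, sub_self]
  rw [h2, map_smul, LinearMap.trace_one] at h1
  have hne : (Module.finrank k U : k) ≠ 0 := by
    have : 0 < Module.finrank k U := by
      rwa [Module.finrank_pos_iff, Submodule.nontrivial_iff_ne_bot]
    exact_mod_cast Nat.cast_ne_zero.mpr this.ne'
  simpa [smul_eq_mul, hne] using h1

set_option maxHeartbeats 1000000 in
/-- The invariance lemma in the proof of Lie's theorem: if `χ` is an eigencharacter for a
subspace `I` of endomorphisms (with eigenvector `v ≠ 0`), and `x` normalizes `I`, then `χ`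
vanishes on `⁅x, I⁆` (in characteristic zero). -/
lemma krylov_weight_lie_eq_zero (x : Module.End k V) (I : Submodule k (Module.End k V))
    (hI : ∀ u ∈ I, ⁅x, u⁆ ∈ I) (χ : Module.End k V → k)
    (v : V) (hv : v ≠ 0) (hve : ∀ u ∈ I, u v = χ u • v) :
    ∀ u ∈ I, χ ⁅x, u⁆ = 0 := by
  set Uc : ℕ → Submodule k V := fun j => Submodule.span k ((fun i => (x ^ i) v) '' Set.Iio j)
    with hUc
  have hmono : Monotone Uc := fun a b hab =>
    Submodule.span_mono (Set.image_mono fun i hi => lt_of_lt_of_le hi hab)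
  have hgen : ∀ i j : ℕ, i < j → (x ^ i) v ∈ Uc j := fun i j hij =>
    Submodule.subset_span ⟨i, hij, rfl⟩
  have hxmap : ∀ j, ∀ w ∈ Uc j, x w ∈ Uc (j + 1) := by
    intro j w hw
    have : Submodule.map x (Uc j) ≤ Uc (j + 1) := by
      rw [hUc, Submodule.map_span]
      apply Submodule.span_le.mpr
      rintro - ⟨-, ⟨i, hi, rfl⟩, rfl⟩
      exact Submodule.subset_span ⟨i + 1, by simpa using Nat.add_lt_add_right hi 1,
        by simp [pow_succ']⟩
    exact this ⟨w, hw, rfl⟩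
  have htri : ∀ i : ℕ, ∀ u ∈ I, u ((x ^ i) v) - χ u • (x ^ i) v ∈ Uc i := by
    intro i
    induction i with
    | zero => intro u hu; simp [hve u hu]
    | succ i ih =>
      intro u hu
      have e1 : (x ^ (i + 1)) v = x ((x ^ i) v) := by rw [pow_succ']; rfl
      have key : u ((x ^ (i + 1)) v) - χ u • (x ^ (i + 1)) v
          = x (u ((x ^ i) v) - χ u • (x ^ i) v)
            - ((⁅x, u⁆ : Module.End k V) ((x ^ i) v) - χ ⁅x, u⁆ • (x ^ i) v)
            - χ ⁅x, u⁆ • (x ^ i) v := by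
        simp only [LieRing.of_associative_ring_bracket, LinearMap.sub_apply,
          Module.End.mul_apply, e1, map_sub, map_smul]
        abel
      rw [key]
      refine sub_mem (sub_mem (hxmap i _ (ih u hu))
        (hmono (Nat.le_succ i) (ih ⁅x, u⁆ (hI u hu)))) ?_
      exact Submodule.smul_mem _ _ (hgen i (i + 1) (Nat.lt_succ_self i))
  obtain ⟨N, hN⟩ := monotone_stabilizes_iff_noetherian.mpr inferInstance (⟨Uc, hmono⟩ : ℕ →o Submodule k V)
  replace hN : ∀ m, N ≤ m → Uc N = Uc m := hN
  set U : Submodule k V := Uc (N + 1) with hU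
  have hUeq : ∀ m, N + 1 ≤ m → U = Uc m := fun m hm => by
    rw [hU, ← hN (N + 1) (Nat.le_succ N), hN m (le_trans (Nat.le_succ N) hm)]
  have hvU : v ∈ U := hmono (Nat.one_le_iff_ne_zero.mpr (Nat.succ_ne_zero N))
    (by simpa using hgen 0 1 Nat.one_pos)
  have hUne : U ≠ ⊥ := fun h => hv (by simpa [h] using hvU)
  have hxU : ∀ w ∈ U, x w ∈ U := by
    intro w hw
    rw [hUeq (N + 2) (by omega)]
    exact hxmap (N + 1) w hw
  have htriU : ∀ u ∈ I, ∀ j, ∀ w ∈ Uc j, u w - χ u • w ∈ Uc (j - 1) := by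
    intro u hu j w hw
    have : Uc j ≤ Submodule.comap (u - χ u • (1 : Module.End k V)) (Uc (j - 1)) := by
      apply Submodule.span_le.mpr
      rintro - ⟨i, hi, rfl⟩
      have hi' : i < j := hi
      simp only [SetLike.mem_coe, Submodule.mem_comap, LinearMap.sub_apply,
        LinearMap.smul_apply, Module.End.one_apply]
      exact hmono (by omega) (htri i u hu)
    simpa using this hw
  have hshiftU : ∀ u ∈ I, ∀ w ∈ U, (u - χ u • (1 : Module.End k V)) w ∈ U := by
    intro u hu w hw
    have := htriU u hu (N + 1) w hw
    simpa using hmono (by omega : N + 1 - 1 ≤ N + 1) this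
  have hIU : ∀ u ∈ I, ∀ w ∈ U, u w ∈ U := by
    intro u hu w hw
    have h1 := hshiftU u hu w hw
    have : u w = (u - χ u • (1 : Module.End k V)) w + χ u • w := by
      simp only [LinearMap.sub_apply, LinearMap.smul_apply, Module.End.one_apply]; abel
    rw [this]
    exact add_mem h1 (Submodule.smul_mem _ _ hw)
  have hnil : ∀ u ∈ I, ∀ j, ∀ w ∈ Uc j,
      (((u - χ u • (1 : Module.End k V))) ^ j) w = 0 := by
    intro u hu j
    induction j with
    | zero =>
      intro w hw
      have h0 : Uc 0 = ⊥ := by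
        have he : Set.Iio 0 = (∅ : Set ℕ) := by ext i; simp
        rw [hUc]
        simp only [he, Set.image_empty, Submodule.span_empty]
      rw [h0] at hw
      simp only [Submodule.mem_bot] at hw
      simp [hw]
    | succ j ih =>
      intro w hw
      have h1 : (u - χ u • (1 : Module.End k V)) w ∈ Uc j := by
        simpa using htriU u hu (j + 1) w hw
      calc (((u - χ u • (1 : Module.End k V))) ^ (j + 1)) w
          = (((u - χ u • (1 : Module.End k V))) ^ j)
            ((u - χ u • (1 : Module.End k V)) w) := by rw [pow_succ]; rfl
        _ = 0 := ih _ h1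
  have htrace : ∀ u, ∀ _ : u ∈ I, ∀ hs : ∀ w ∈ U, u w ∈ U,
      LinearMap.trace k U (u.restrict hs) = χ u * Module.finrank k U := by
    intro u hu hs
    have hdecomp : u.restrict hs
        = χ u • (1 : Module.End k U) + (u - χ u • (1 : Module.End k V)).restrict
            (hshiftU u hu) := by
      ext w
      simp [LinearMap.restrict_apply]
    have hnil' : IsNilpotent ((u - χ u • (1 : Module.End k V)).restrict (hshiftU u hu)) := by
      refine ⟨N + 1, ?_⟩
      rw [Module.End.pow_restrict]
      ext w
      simpa [LinearMap.restrict_apply] using hnil u hu (N + 1) (w : V) w.2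
    rw [hdecomp, map_add, map_smul, LinearMap.trace_one,
      (LinearMap.isNilpotent_trace_of_isNilpotent hnil').eq_zero]
    simp [mul_comm]
  intro u hu
  have hsr : ∀ w ∈ U, (⁅x, u⁆ : Module.End k V) w ∈ U := lie_mem_of_mem x u U hxU (hIU u hu)
  have h1 := htrace ⁅x, u⁆ (hI u hu) hsr
  have h2 : LinearMap.trace k U ((⁅x, u⁆ : Module.End k V).restrict hsr) = 0 := by
    have : (⁅x, u⁆ : Module.End k V).restrict hsr =
        (x.restrict hxU) * (u.restrict (hIU u hu)) -
        (u.restrict (hIU u hu)) * (x.restrict hxU) := by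
      ext w
      simp [LieRing.of_associative_ring_bracket, LinearMap.restrict_apply]
    rw [this, map_sub, LinearMap.trace_mul_comm, sub_self]
  rw [h1] at h2
  have hne : (Module.finrank k U : k) ≠ 0 := by
    have : 0 < Module.finrank k U := by
      rwa [Module.finrank_pos_iff, Submodule.nontrivial_iff_ne_bot]
    exact_mod_cast Nat.cast_ne_zero.mpr this.ne'
  exact (mul_eq_zero.mp h2).resolve_right hne

end Aux

set_option maxHeartbeats 2000000 in
/-- Every solvable `G`-stable Lie subalgebra of `sl(V)` (traceless
endomorphisms), for `V` an irreducible representation of a finite group `G` over an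
algebraically closed field of characteristic zero, is abelian. -/
theorem solvable_G_stable_subalgebra_abelian
    {k G V : Type*} [Field k] [IsAlgClosed k] [CharZero k] [Group G] [Finite G]
    [AddCommGroup V] [Module k V] [FiniteDimensional k V]
    (ρ : Representation k G V) (hirr : ρ.IsIrred)
    (L : LieSubalgebra k (Module.End k V))
    (hsl : ∀ f ∈ L, LinearMap.trace k V f = 0)
    (hstab : ρ.StableLieSubalgebra L)
    (hsolv : LieAlgebra.IsSolvable ↥L) :
    IsLieAbelian ↥L := by
  classical
  obtain ⟨hV, hsub⟩ := hirr
  -- basic conjugation facts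
  have hρ1 : ∀ g : G, ρ g * ρ g⁻¹ = 1 := fun g => by rw [← map_mul, mul_inv_cancel, map_one]
  have hρ2 : ∀ g : G, ρ g⁻¹ * ρ g = 1 := fun g => by rw [← map_mul, inv_mul_cancel, map_one]
  have hconj_mul : ∀ (g : G) (a b : Module.End k V),
      (ρ g * a * ρ g⁻¹) * (ρ g * b * ρ g⁻¹) = ρ g * (a * b) * ρ g⁻¹ := by
    intro g a b
    simp only [mul_assoc]
    rw [show ρ g⁻¹ * (ρ g * (b * ρ g⁻¹)) = b * ρ g⁻¹ by rw [← mul_assoc, hρ2, one_mul]]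
  -- conjugation as Lie algebra endomorphism of L
  let τ : G → (↥L →ₗ⁅k⁆ ↥L) := fun g =>
    { toFun := fun x => ⟨ρ g * (x : Module.End k V) * ρ g⁻¹, hstab g _ x.2⟩
      map_add' := by
        intro x y
        apply Subtype.ext
        show ρ g * ((x : Module.End k V) + (y : Module.End k V)) * ρ g⁻¹
            = ρ g * (x : Module.End k V) * ρ g⁻¹ + ρ g * (y : Module.End k V) * ρ g⁻¹
        rw [mul_add, add_mul]
      map_smul' := by
        intro c x
        apply Subtype.ext
        show ρ g * (c • (x : Module.End k V)) * ρ g⁻¹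
            = c • (ρ g * (x : Module.End k V) * ρ g⁻¹)
        rw [mul_smul_comm, smul_mul_assoc]
      map_lie' := by
        intro x y
        apply Subtype.ext
        show ρ g * (⁅(x : Module.End k V), (y : Module.End k V)⁆) * ρ g⁻¹ = _
        have : (⁅((⟨ρ g * (x : Module.End k V) * ρ g⁻¹, hstab g _ x.2⟩ : ↥L)),
            (⟨ρ g * (y : Module.End k V) * ρ g⁻¹, hstab g _ y.2⟩ : ↥L)⁆ : ↥L).val
            = (ρ g * (x : Module.End k V) * ρ g⁻¹) * (ρ g * (y : Module.End k V) * ρ g⁻¹)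
              - (ρ g * (y : Module.End k V) * ρ g⁻¹) * (ρ g * (x : Module.End k V) * ρ g⁻¹) :=
          rfl
        rw [this, hconj_mul, hconj_mul]
        simp only [LieRing.of_associative_ring_bracket, mul_sub, sub_mul] }
  -- derived series terms are stable under τ
  have hDstab : ∀ n : ℕ, ∀ g : G, ∀ x : ↥L,
      x ∈ LieAlgebra.derivedSeries k ↥L n → τ g x ∈ LieAlgebra.derivedSeries k ↥L n := by
    intro n g x hx
    exact LieIdeal.derivedSeries_map_le n (LieIdeal.mem_map (f := τ g) hx)
  -- it suffices to show the derived subalgebra is trivial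
  suffices hD1 : LieAlgebra.derivedSeries k ↥L 1 = ⊥ by
    constructor
    intro a b
    have hmem : ⁅a, b⁆ ∈ LieAlgebra.derivedSeries k ↥L 1 := by
      rw [LieAlgebra.derivedSeries_def, LieAlgebra.derivedSeriesOfIdeal_succ,
        LieAlgebra.derivedSeriesOfIdeal_zero]
      exact LieSubmodule.lie_mem_lie (LieSubmodule.mem_top a) (LieSubmodule.mem_top b)
    rw [hD1] at hmem
    simpa using hmem
  by_contra hne
  obtain ⟨n, hn⟩ := (LieAlgebra.isSolvable_iff k ↥L).mp hsolv
  have hex : ∃ i, LieAlgebra.derivedSeries k ↥L i = ⊥ := ⟨n, hn⟩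
  set m := Nat.find hex with hm
  have hmbot : LieAlgebra.derivedSeries k ↥L m = ⊥ := Nat.find_spec hex
  have hmin : ∀ i < m, LieAlgebra.derivedSeries k ↥L i ≠ ⊥ := fun i hi => Nat.find_min hex hi
  have hm2 : 2 ≤ m := by
    rcases Nat.lt_or_ge m 2 with h | h
    · interval_cases m
      · exact absurd (le_bot_iff.mp (hmbot ▸ le_top : (⊤ : LieIdeal k ↥L) ≤ _)) (by
          intro h
          exact hne (le_bot_iff.mp (by
            rw [← h]
            exact le_top)))
      · exact absurd hmbot hne
    · exact h
  obtain ⟨j, hj⟩ : ∃ j, m = j + 2 := ⟨m - 2, by omega⟩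
  rw [hj] at hmbot
  replace hmin : ∀ i < j + 2, LieAlgebra.derivedSeries k ↥L i ≠ ⊥ := fun i hi =>
    hmin i (by omega)
  -- the last nonzero derived term A
  set A : LieIdeal k ↥L := LieAlgebra.derivedSeries k ↥L (j + 1) with hA
  have hAne : A ≠ ⊥ := hmin (j + 1) (by omega)
  have hAab : IsLieAbelian ↥A := by
    rw [hA, LieAlgebra.derivedSeries_def]
    rw [LieAlgebra.abelian_iff_derived_succ_eq_bot]
    rw [← LieAlgebra.derivedSeries_def]
    exact hmbot
  haveI := hAab
  haveI := hV
  -- a weight of A on V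
  have hwex : ∃ χ : ↥A → k, LieModule.genWeightSpace V χ ≠ ⊥ := by
    by_contra h
    push_neg at h
    have htop := LieModule.iSup_genWeightSpace_eq_top k ↥A V
    have hbot : (⨆ χ : ↥A → k, LieModule.genWeightSpace V χ) = (⊥ : LieSubmodule k ↥A V) := by
      simp [h]
    rw [hbot] at htop
    obtain ⟨w, hw⟩ := exists_ne (0 : V)
    have : w ∈ (⊥ : LieSubmodule k ↥A V) := htop.ge (LieSubmodule.mem_top w)
    exact hw (by simpa using this)
  obtain ⟨χ, hχ⟩ := hwex
  set χw : LieModule.Weight k ↥A V := ⟨χ, hχ⟩ with hχw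
  obtain ⟨v, hv0, hveig⟩ := LieModule.exists_forall_lie_eq_smul k ↥A V χw
  have hveig' : ∀ u : ↥A, ((u : ↥L) : Module.End k V) v = χw u • v := fun u => hveig u
  -- the image of A in End k V
  set AS : Submodule k (Module.End k V) :=
    Submodule.map (L.toSubmodule.subtype) (A : Submodule k ↥L) with hAS
  have hASmem : ∀ u : ↥A, ((u : ↥L) : Module.End k V) ∈ AS := fun u =>
    ⟨(u : ↥L), u.2, rfl⟩
  have hAS_L : ∀ f, f ∈ AS → f ∈ L.toSubmodule := fun f hf => by
    obtain ⟨y, _, rfl⟩ := hf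
    exact y.2
  have hAS_A : ∀ f, ∀ hf : f ∈ AS, (⟨f, hAS_L f hf⟩ : ↥L) ∈ A := by
    intro f hf
    obtain ⟨y, hy, rfl⟩ := hf
    exact (by exact hy : y ∈ A)
  -- extend χ to a function on End k V
  set χE : Module.End k V → k := fun f =>
    if h : f ∈ AS then χw ⟨⟨f, hAS_L f h⟩, hAS_A f h⟩ else 0 with hχE
  have hχE_eq : ∀ u : ↥A, χE ((u : ↥L) : Module.End k V) = χw u := by
    intro u
    rw [hχE]
    simp only [hASmem u, dif_pos]
  have hASlie : ∀ x : ↥L, ∀ f ∈ AS, ⁅(x : Module.End k V), f⁆ ∈ AS := by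
    intro x f hf
    have h1 : (⁅x, (⟨f, hAS_L f hf⟩ : ↥L)⁆ : ↥L) ∈ A := A.lie_mem (hAS_A f hf)
    exact ⟨_, h1, rfl⟩
  have hveAS : ∀ f ∈ AS, f v = χE f • v := by
    intro f hf
    have := hveig' ⟨⟨f, hAS_L f hf⟩, hAS_A f hf⟩
    rw [hχE]
    simpa [dif_pos hf] using this
  -- the key invariance: χ vanishes on brackets with L
  have hkry : ∀ x : ↥L, ∀ f ∈ AS, χE ⁅(x : Module.End k V), f⁆ = 0 := fun x =>
    krylov_weight_lie_eq_zero (x : Module.End k V) AS (hASlie x) χE v hv0 hveAS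
  -- the χ-eigenspace E
  set E : Submodule k V := ⨅ u : ↥A, LinearMap.ker
    (((u : ↥L) : Module.End k V) - χw u • (1 : Module.End k V)) with hE
  have hmemE : ∀ w, w ∈ E ↔ ∀ u : ↥A, ((u : ↥L) : Module.End k V) w = χw u • w := by
    intro w
    rw [hE]
    simp only [Submodule.mem_iInf, LinearMap.mem_ker, LinearMap.sub_apply,
      LinearMap.smul_apply, Module.End.one_apply, sub_eq_zero]
  have hvE : v ∈ E := (hmemE v).mpr hveig'
  have hEne : E ≠ ⊥ := fun h => hv0 (by simpa [h] using hvE)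
  -- E is stable under L
  have hLE : ∀ x : ↥L, ∀ w ∈ E, (x : Module.End k V) w ∈ E := by
    intro x w hw
    rw [hmemE] at hw ⊢
    intro u
    have hbr : ((u : ↥L) : Module.End k V) ((x : Module.End k V) w)
        = (x : Module.End k V) (((u : ↥L) : Module.End k V) w)
          - (⁅(x : Module.End k V), ((u : ↥L) : Module.End k V)⁆ : Module.End k V) w := by
      simp only [LieRing.of_associative_ring_bracket, LinearMap.sub_apply, Module.End.mul_apply]
      abel
    have hbrAS : (⁅(x : Module.End k V), ((u : ↥L) : Module.End k V)⁆ : Module.End k V) ∈ AS :=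
      hASlie x _ (hASmem u)
    have hbr0 : (⁅(x : Module.End k V), ((u : ↥L) : Module.End k V)⁆ : Module.End k V) w
        = χE ⁅(x : Module.End k V), ((u : ↥L) : Module.End k V)⁆ • w := by
      -- the bracket is in AS, and acts on E-elements by its χE-eigenvalue
      have h1 := hw ⟨⟨_, hAS_L _ hbrAS⟩, hAS_A _ hbrAS⟩
      simp only [hχE]
      rw [dif_pos hbrAS]
      exact h1
    rw [hbr, hw u, hbr0, hkry x _ (hASmem u), map_smul]
    simp
  -- χ vanishes on A (brackets of elements of D j, which preserve E)
  have hχ0 : ∀ u : ↥A, χw u = 0 := by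
    have hspan : (A : Submodule k ↥L) =
        Submodule.span k {z : ↥L | ∃ a ∈ LieAlgebra.derivedSeries k ↥L j,
          ∃ b ∈ LieAlgebra.derivedSeries k ↥L j, ⁅a, b⁆ = z} := by
      rw [hA, LieAlgebra.derivedSeries_def, LieAlgebra.derivedSeriesOfIdeal_succ,
        ← LieAlgebra.derivedSeries_def k ↥L j]
      exact LieSubmodule.lieIdeal_oper_eq_linear_span' ..
    set χl : ↥A →ₗ[k] k := χw.toLinear k ↥A V with hχl
    have hgen0 : ∀ z : ↥L, (∃ a ∈ LieAlgebra.derivedSeries k ↥L j,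
        ∃ b ∈ LieAlgebra.derivedSeries k ↥L j, ⁅a, b⁆ = z) →
        ∀ hz : z ∈ A, χw ⟨z, hz⟩ = 0 := by
      rintro z ⟨a, _, b, _, rfl⟩ hz
      apply scalar_eq_zero_of_lie (a : Module.End k V) (b : Module.End k V) E hEne
        (hLE a) (hLE b)
      intro w hw
      have h1 := (hmemE w).mp hw ⟨⁅a, b⁆, hz⟩
      exact h1
    -- push through the span
    intro u
    have hu : (u : ↥L) ∈ Submodule.span k {z : ↥L | ∃ a ∈ LieAlgebra.derivedSeries k ↥L j,
        ∃ b ∈ LieAlgebra.derivedSeries k ↥L j, ⁅a, b⁆ = z} := by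
      rw [← hspan]
      exact u.2
    have hK : Submodule.span k {z : ↥L | ∃ a ∈ LieAlgebra.derivedSeries k ↥L j,
        ∃ b ∈ LieAlgebra.derivedSeries k ↥L j, ⁅a, b⁆ = z} ≤
        Submodule.map (A : Submodule k ↥L).subtype (LinearMap.ker χl) := by
      apply Submodule.span_le.mpr
      intro z hzS
      have hzA : z ∈ A := by
        have h2 : z ∈ (A : Submodule k ↥L) := hspan ▸ Submodule.subset_span hzS
        exact h2
      refine ⟨⟨z, hzA⟩, ?_, rfl⟩
      show χl ⟨z, hzA⟩ = 0
      have := hgen0 z hzS hzA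
      simpa [hχl] using this
    obtain ⟨z, hzker, hzeq⟩ := hK hu
    have : z = u := Subtype.ext hzeq
    rw [← this]
    exact LinearMap.mem_ker.mp hzker
  -- the common kernel of A
  set W : Submodule k V := ⨅ u : ↥A, LinearMap.ker ((u : ↥L) : Module.End k V) with hW
  have hmemW : ∀ w, w ∈ W ↔ ∀ u : ↥A, ((u : ↥L) : Module.End k V) w = 0 := by
    intro w
    rw [hW]
    simp [Submodule.mem_iInf]
  have hvW : v ∈ W := by
    rw [hmemW]
    intro u
    rw [hveig' u, hχ0 u, zero_smul]
  -- W is G-stable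
  have hWstab : ∀ g : G, ∀ w ∈ W, ρ g w ∈ W := by
    intro g w hw
    rw [hmemW] at hw ⊢
    intro u
    have hconj : (τ g⁻¹ (u : ↥L) : Module.End k V)
        = ρ g⁻¹ * ((u : ↥L) : Module.End k V) * ρ g := by
      show ρ g⁻¹ * ((u : ↥L) : Module.End k V) * ρ g⁻¹⁻¹ = _
      rw [inv_inv]
    have hmem : τ g⁻¹ (u : ↥L) ∈ A := hDstab (j + 1) g⁻¹ (u : ↥L) u.2
    have h0 : (τ g⁻¹ (u : ↥L) : Module.End k V) w = 0 := hw ⟨_, hmem⟩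
    have : ((u : ↥L) : Module.End k V) * ρ g = ρ g * (τ g⁻¹ (u : ↥L) : Module.End k V) := by
      rw [hconj, show ρ g * (ρ g⁻¹ * ((u : ↥L) : Module.End k V) * ρ g)
        = (ρ g * ρ g⁻¹) * ((u : ↥L) : Module.End k V) * ρ g by simp [mul_assoc], hρ1, one_mul]
    calc ((u : ↥L) : Module.End k V) (ρ g w)
        = (((u : ↥L) : Module.End k V) * ρ g) w := rfl
      _ = (ρ g * (τ g⁻¹ (u : ↥L) : Module.End k V)) w := by rw [this]
      _ = ρ g ((τ g⁻¹ (u : ↥L) : Module.End k V) w) := rfl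
      _ = 0 := by rw [h0, map_zero]
  -- by irreducibility W = ⊤, hence A = ⊥, contradiction
  have hWtop : W = ⊤ := by
    rcases hsub W hWstab with h | h
    · exact absurd (h ▸ hvW) (by simpa using hv0)
    · exact h
  apply hAne
  rw [eq_bot_iff]
  intro z hz
  have hz0 : ((⟨z, hz⟩ : ↥A) : ↥L).val = 0 := by
    ext w
    have hwW : w ∈ W := hWtop ▸ Submodule.mem_top
    rw [hmemW] at hwW
    simpa using hwW ⟨z, hz⟩
  have : z = 0 := Subtype.ext hz0
  simp [this]
end

section
/- Let G be a finite group and V an irreducible G-representation over an algebraically closed field of characteristic zero. If V is imprimitive (i.e., V decomposes as a direct sum of at least two nonzero subspaces permuted by G), then sl(V) contains a non-zero abelian G-stable Lie subalgebra. -/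
attribute [local instance 100] LieRing.ofAssociativeRing

/-- A representation is imprimitive if `V` is a direct sum of at least two nonzero subspaces
which are permuted by the action of `G`. -/
def Representation.IsImprimitive {k G V : Type*} [CommSemiring k] [Monoid G]
    [AddCommMonoid V] [Module k V] (ρ : Representation k G V) : Prop :=
  ∃ (ι : Type) (W : ι → Submodule k V),
    (∀ i, W i ≠ ⊥) ∧ (∃ i j : ι, i ≠ j) ∧ iSupIndep W ∧ iSup W = ⊤ ∧
    ∀ (g : G) (i : ι), ∃ j : ι, (W i).map (ρ g) ≤ W j

/-- If `V` is an irreducible but imprimitive representation of a finite group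
`G` over an algebraically closed field of characteristic zero, then `sl(V)` contains a nonzero
abelian `G`-stable Lie subalgebra. -/
theorem imprimitive_gives_abelian_subalgebra
    {k G V : Type*} [Field k] [IsAlgClosed k] [CharZero k] [Group G] [Finite G]
    [AddCommGroup V] [Module k V] [FiniteDimensional k V]
    (ρ : Representation k G V) (hirr : ρ.IsIrred) (himp : ρ.IsImprimitive) :
    ∃ L : LieSubalgebra k (Module.End k V),
      L ≠ ⊥ ∧ (∀ f ∈ L, LinearMap.trace k V f = 0) ∧
      ρ.StableLieSubalgebra L ∧ IsLieAbelian ↥L := by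
  obtain ⟨ι, W, hne, ⟨i, j, hij⟩, hind, hsup, hmap⟩ := himp
  -- the submodule of blockwise-scalar endomorphisms
  set D : Submodule k (Module.End k V) :=
    { carrier := {f | ∀ m, ∃ c : k, ∀ v ∈ W m, f v = c • v}
      add_mem' := by
        intro f g hf hg m
        obtain ⟨c, hc⟩ := hf m; obtain ⟨d, hd⟩ := hg m
        exact ⟨c + d, fun v hv => by simp [hc v hv, hd v hv, add_smul]⟩
      zero_mem' := fun m => ⟨0, fun v hv => by simp⟩
      smul_mem' := by
        intro a f hf m
        obtain ⟨c, hc⟩ := hf m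
        exact ⟨a * c, fun v hv => by simp [hc v hv, mul_smul]⟩ } with hDdef
  have hDmem : ∀ f : Module.End k V, f ∈ D ↔ ∀ m, ∃ c : k, ∀ v ∈ W m, f v = c • v :=
    fun f => Iff.rfl
  -- blockwise scalar endos commute
  have hcomm : ∀ f ∈ D, ∀ g ∈ D, f * g = g * f := by
    intro f hf g hg
    ext v
    have hv : v ∈ ⨆ m, W m := by rw [hsup]; exact Submodule.mem_top
    refine Submodule.iSup_induction W (motive := fun v => (f * g) v = (g * f) v) hv ?_ (by simp) ?_
    · intro m x hx
      obtain ⟨c, hc⟩ := (hDmem f).1 hf m; obtain ⟨d, hd⟩ := (hDmem g).1 hg m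
      show f (g x) = g (f x)
      rw [hd x hx, hc x hx, map_smul, map_smul, hc x hx, hd x hx, smul_comm]
    · intro x y hx hy
      show (f * g) (x + y) = (g * f) (x + y)
      simp only [map_add]
      rw [show (f * g) x = (g * f) x from hx, show (f * g) y = (g * f) y from hy]
  -- the Lie subalgebra
  set L : LieSubalgebra k (Module.End k V) :=
    { toSubmodule := D ⊓ LinearMap.ker (LinearMap.trace k V)
      lie_mem' := by
        intro x y hx hy
        have : ⁅x, y⁆ = 0 := by
          rw [LieRing.of_associative_ring_bracket, hcomm x hx.1 y hy.1, sub_self]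
        rw [this]
        exact Submodule.zero_mem _ } with hLdef
  have hLmem : ∀ f : Module.End k V,
      f ∈ L ↔ f ∈ D ∧ LinearMap.trace k V f = 0 := fun f => Iff.rfl
  refine ⟨L, ?_, fun f hf => ((hLmem f).1 hf).2, ?_, ?_⟩
  · -- L is nonzero: build a nonzero trace-zero element of D
    -- projection onto W i
    have hcompl : IsCompl (W i) (⨆ m, ⨆ (_ : m ≠ i), W m) := by
      refine ⟨hind i, codisjoint_iff.2 ?_⟩
      rw [← top_le_iff, ← hsup]
      refine iSup_le fun m => ?_
      by_cases hm : m = i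
      · subst hm; exact le_sup_left
      · exact le_trans (le_iSup₂ (f := fun m _ => W m) m hm) le_sup_right
    set π : Module.End k V := (W i).subtype ∘ₗ (W i).linearProjOfIsCompl _ hcompl with hπ
    have hπ_left : ∀ v ∈ W i, π v = v := by
      intro v hv
      simp [hπ, Submodule.linearProjOfIsCompl_apply_left hcompl ⟨v, hv⟩]
      exact congrArg Subtype.val (Submodule.linearProjOfIsCompl_apply_left hcompl ⟨v, hv⟩)
    have hπ_right : ∀ m, m ≠ i → ∀ v ∈ W m, π v = 0 := by
      intro m hm v hv
      have hv' : v ∈ ⨆ m, ⨆ (_ : m ≠ i), W m := le_iSup₂ (f := fun m _ => W m) m hm hv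
      simp [hπ, Submodule.linearProjOfIsCompl_apply_right hcompl ⟨v, hv'⟩]
      exact Submodule.linearProjOfIsCompl_apply_right hcompl ⟨v, hv'⟩
    have hπD : π ∈ D := by
      rw [hDmem]
      intro m
      by_cases hm : m = i
      · subst hm; exact ⟨1, fun v hv => by rw [hπ_left v hv, one_smul]⟩
      · exact ⟨0, fun v hv => by rw [hπ_right m hm v hv, zero_smul]⟩
    have hV : Nontrivial V := hirr.1
    have hdim : (Module.finrank k V : k) ≠ 0 := by
      exact Nat.cast_ne_zero.2 Module.finrank_pos.ne'
    set c : k := LinearMap.trace k V π / (Module.finrank k V : k) with hc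
    set g0 : Module.End k V := π - c • 1 with hg0
    have hg0D : g0 ∈ D := Submodule.sub_mem D hπD (Submodule.smul_mem D c (by
      rw [hDmem]; exact fun m => ⟨1, fun v hv => by simp⟩))
    have hg0tr : LinearMap.trace k V g0 = 0 := by
      rw [hg0, map_sub, map_smul, LinearMap.trace_one, smul_eq_mul, hc,
        div_mul_cancel₀ _ hdim, sub_self]
    have hg0L : g0 ∈ L := (hLmem g0).2 ⟨hg0D, hg0tr⟩
    have hg0ne : g0 ≠ 0 := by
      intro h0
      obtain ⟨v, hvW, hvne⟩ := Submodule.exists_mem_ne_zero_of_ne_bot (hne i)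
      obtain ⟨w, hwW, hwne⟩ := Submodule.exists_mem_ne_zero_of_ne_bot (hne j)
      have h1 : π v - c • v = 0 := by
        have := congrArg (fun f : Module.End k V => f v) h0
        simpa [hg0] using this
      have h2 : π w - c • w = 0 := by
        have := congrArg (fun f : Module.End k V => f w) h0
        simpa [hg0] using this
      rw [hπ_left v hvW] at h1
      rw [hπ_right j (fun h => hij h.symm) w hwW] at h2
      have hcz : c = 0 := by
        have hcw : c • w = 0 := by rwa [zero_sub, neg_eq_zero] at h2
        exact (smul_eq_zero.1 hcw).resolve_right hwne
      have hco : c = 1 := by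
        have hv0 : (1 - c) • v = 0 := by rw [sub_smul, one_smul, h1]
        have h1c := (smul_eq_zero.1 hv0).resolve_right hvne
        exact (sub_eq_zero.1 h1c).symm
      rw [hcz] at hco; exact one_ne_zero hco.symm
    intro hbot
    rw [hbot] at hg0L
    exact hg0ne ((LieSubalgebra.mem_bot g0).1 hg0L)
  · -- stability
    intro g f hf
    obtain ⟨hfD, hftr⟩ := (hLmem f).1 hf
    refine (hLmem _).2 ⟨?_, ?_⟩
    · rw [hDmem]
      intro m
      obtain ⟨l, hl⟩ := hmap g⁻¹ m
      obtain ⟨c, hcs⟩ := (hDmem f).1 hfD l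
      refine ⟨c, fun v hv => ?_⟩
      have hmem : ρ g⁻¹ v ∈ W l := hl ⟨v, hv, rfl⟩
      have hback : ρ g (ρ g⁻¹ v) = v := by
        rw [← Module.End.mul_apply, ← map_mul, mul_inv_cancel, map_one, Module.End.one_apply]
      calc (ρ g * f * ρ g⁻¹) v = ρ g (f (ρ g⁻¹ v)) := rfl
        _ = ρ g (c • ρ g⁻¹ v) := by rw [hcs _ hmem]
        _ = c • ρ g (ρ g⁻¹ v) := by rw [map_smul]
        _ = c • v := by rw [hback]
    · rw [mul_assoc, LinearMap.trace_mul_comm, mul_assoc, ← map_mul, inv_mul_cancel, map_one,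
        mul_one, hftr]
  · -- abelian
    constructor
    intro x y
    have : (⁅x, y⁆ : L) = (0 : L) := by
      apply Subtype.ext
      show ⁅(x : Module.End k V), (y : Module.End k V)⁆ = 0
      rw [LieRing.of_associative_ring_bracket, hcomm x x.2.1 y y.2.1, sub_self]
    exact this
end

section
/- Let G be a finite group and V an irreducible G-representation over an algebraically closed field of characteristic zero. If sl(V) contains a non-zero abelian G-stable Lie subalgebra, then V is imprimitive. -/
attribute [local instance 100] LieRing.ofAssociativeRing

/-- Conjugation commutes with powers, given a two-sided inverse. -/
lemma conj_pow_of_mul_inv {M : Type*} [Monoid M] {u v : M} (huv : u * v = 1)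
    (hvu : v * u = 1) (a : M) (n : ℕ) :
    (u * a * v) ^ n = u * a ^ n * v := by
  induction n with
  | zero => simpa using huv.symm
  | succ n ih =>
    rw [pow_succ, ih, pow_succ]
    simp only [mul_assoc]
    rw [← mul_assoc v u, hvu, one_mul]

/-- If `sl(V)` contains a nonzero abelian `G`-stable Lie subalgebra, for `V`
an irreducible representation of a finite group `G` over an algebraically closed field of
characteristic zero, then `V` is imprimitive. -/
theorem abelian_subalgebra_gives_imprimitive
    {k G V : Type*} [Field k] [IsAlgClosed k] [CharZero k] [Group G] [Finite G]
    [AddCommGroup V] [Module k V] [FiniteDimensional k V]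
    (ρ : Representation k G V) (hirr : ρ.IsIrred)
    (L : LieSubalgebra k (Module.End k V)) (hne : L ≠ ⊥)
    (hsl : ∀ f ∈ L, LinearMap.trace k V f = 0)
    (hstab : ρ.StableLieSubalgebra L)
    (hab : IsLieAbelian ↥L) :
    ρ.IsImprimitive := by
  classical
  obtain ⟨hV, hirrU⟩ := hirr
  haveI : Nontrivial V := hV
  haveI : IsLieAbelian ↥L := hab
  haveI : LieRing.IsNilpotent ↥L := inferInstance
  -- The action of `x : L` on `V` is just application of the endomorphism `x`.
  have htoEnd : ∀ x : ↥L, LieModule.toEnd k (↥L) V x = (x : Module.End k V) := fun _ => rfl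
  have hgg : ∀ g : G, (ρ g) * (ρ g⁻¹) = 1 := fun g => by
    rw [← map_mul, mul_inv_cancel, map_one]
  have hgg' : ∀ g : G, (ρ g⁻¹) * (ρ g) = 1 := fun g => by
    rw [← map_mul, inv_mul_cancel, map_one]
  -- Conjugation action of `G` on `L`.
  set c : G → ↥L → ↥L := fun g x => ⟨ρ g⁻¹ * (x : Module.End k V) * ρ g, by
    have := hstab g⁻¹ (x : Module.End k V) x.2; rwa [inv_inv] at this⟩ with hc
  have hconj : ∀ (g : G) (x : ↥L) (t : k),
      (x : Module.End k V) - t • (1 : Module.End k V) =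
        ρ g * (((c g x : ↥L) : Module.End k V) - t • (1 : Module.End k V)) * ρ g⁻¹ := by
    intro g x t
    simp only [hc]
    rw [mul_sub, sub_mul]
    congr 1
    · rw [← mul_assoc, ← mul_assoc, hgg, one_mul, mul_assoc, hgg, mul_one]
    · rw [mul_smul_comm, smul_mul_assoc, mul_one, hgg]
  -- `ρ g` maps the weight space of `χ` into the weight space of `χ ∘ c g`.
  have hmap : ∀ (g : G) (χ : ↥L → k),
      ((LieModule.genWeightSpace V χ : LieSubmodule k ↥L V) : Submodule k V).map (ρ g) ≤
        ((LieModule.genWeightSpace V (fun x => χ (c g x)) : LieSubmodule k ↥L V) :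
          Submodule k V) := by
    intro g χ
    rintro _ ⟨v, hv, rfl⟩
    simp only [SetLike.mem_coe, LieSubmodule.mem_toSubmodule] at hv ⊢
    rw [LieModule.mem_genWeightSpace] at hv ⊢
    intro x
    obtain ⟨n, hn⟩ := hv (c g x)
    refine ⟨n, ?_⟩
    have h1 : ((LieModule.toEnd k ↥L V x) - χ (c g x) • (1 : Module.End k V)) ^ n =
        ρ g * ((LieModule.toEnd k ↥L V (c g x)) - χ (c g x) • (1 : Module.End k V)) ^ n
          * ρ g⁻¹ := by
      rw [htoEnd, htoEnd, hconj g x (χ (c g x)),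
        conj_pow_of_mul_inv (hgg g) (hgg' g)]
    rw [h1, Module.End.mul_apply, Module.End.mul_apply]
    have h2 : (ρ g⁻¹) ((ρ g) v) = v := by
      have := LinearMap.congr_fun (hgg' g) v
      simpa using this
    rw [h2, hn, map_zero]
  -- At least two weights exist; otherwise `L` would consist of nilpotent endomorphisms
  -- with a nonzero `G`-stable joint kernel, contradicting irreducibility and `L ≠ ⊥`.
  have hne2 : ∃ i j : LieModule.Weight k ↥L V, i ≠ j := by
    by_contra hcon
    push_neg at hcon
    -- There is at least one weight.
    obtain ⟨v₀, hv₀⟩ := exists_ne (0 : V)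
    have hv₀top : v₀ ∈ (⊤ : LieSubmodule k ↥L V) := trivial
    rw [← LieModule.iSup_genWeightSpace_eq_top' k ↥L V] at hv₀top
    have hWne : Nonempty (LieModule.Weight k ↥L V) := by
      by_contra hempty
      rw [not_nonempty_iff] at hempty
      rw [iSup_of_empty] at hv₀top
      exact hv₀ (by simpa using hv₀top)
    obtain ⟨χ₀⟩ := hWne
    -- The unique weight space is everything.
    have htop : LieModule.genWeightSpace V (χ₀ : ↥L → k) = ⊤ := by
      rw [← LieModule.iSup_genWeightSpace_eq_top' k ↥L V]
      refine le_antisymm (le_iSup (fun χ : LieModule.Weight k ↥L V =>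
        LieModule.genWeightSpace V (χ : ↥L → k)) χ₀) (iSup_le fun χ => ?_)
      rw [hcon χ χ₀]
    -- Each `x - χ₀ x • 1` is nilpotent on `V`.
    have hnil : ∀ x : ↥L, IsNilpotent
        ((x : Module.End k V) - algebraMap k (Module.End k V) ((χ₀ : ↥L → k) x)) := by
      intro x
      obtain ⟨n, hn⟩ := LieModule.exists_genWeightSpace_le_ker_of_isNoetherian V
        (χ₀ : ↥L → k) x
      rw [htop] at hn
      refine ⟨n, ?_⟩
      have : LinearMap.ker ((LieModule.toEnd k ↥L V x
          - algebraMap k (Module.End k V) ((χ₀ : ↥L → k) x)) ^ n) = ⊤ := by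
        rw [eq_top_iff]
        intro v _
        exact hn (LieSubmodule.mem_top v)
      rw [htoEnd] at this
      exact LinearMap.ker_eq_top.mp this
    -- The trace condition forces `χ₀ = 0`.
    have hzero : ∀ x : ↥L, (χ₀ : ↥L → k) x = 0 := by
      intro x
      have htr := hsl (x : Module.End k V) x.2
      have h1 : LinearMap.trace k V ((x : Module.End k V)
          - algebraMap k (Module.End k V) ((χ₀ : ↥L → k) x)) = 0 :=
        (LinearMap.isNilpotent_trace_of_isNilpotent (hnil x)).eq_zero
      rw [map_sub, htr, zero_sub, neg_eq_zero] at h1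
      rw [Module.algebraMap_end_eq_smul_id, map_smul, LinearMap.trace_id, smul_eq_mul] at h1
      have hd : (Module.finrank k V : k) ≠ 0 :=
        Nat.cast_ne_zero.mpr (Module.finrank_pos (R := k) (M := V)).ne'
      exact (mul_eq_zero.mp h1).resolve_right hd
    -- Hence `L` acts nilpotently on `V`.
    haveI : LieModule.IsNilpotent ↥L V := by
      refine (LieModule.isNilpotent_iff_forall' (R := k)).mpr fun x => ?_
      have := hnil x
      rwa [hzero x, map_zero, sub_zero, ← htoEnd x] at this
    -- The joint kernel is a nonzero `G`-stable subspace.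
    haveI := LieModule.nontrivial_max_triv_of_isNilpotent k ↥L V
    obtain ⟨m, hm⟩ := exists_ne (0 : ↥(LieModule.maxTrivSubmodule k ↥L V))
    set U : Submodule k V :=
      ((LieModule.maxTrivSubmodule k ↥L V : LieSubmodule k ↥L V) : Submodule k V) with hU
    have hmemU : ∀ v : V, v ∈ U ↔ ∀ x : ↥L, (x : Module.End k V) v = 0 := by
      intro v
      rw [hU, LieSubmodule.mem_toSubmodule, LieModule.mem_maxTrivSubmodule]
      rfl
    have hUstab : ∀ g : G, ∀ v ∈ U, ρ g v ∈ U := by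
      intro g v hv
      rw [hmemU] at hv ⊢
      intro x
      have h1 : (x : Module.End k V) = ρ g * ((c g x : ↥L) : Module.End k V) * ρ g⁻¹ := by
        have := hconj g x 0
        simpa using this
      rw [h1, Module.End.mul_apply, Module.End.mul_apply]
      have h2 : (ρ g⁻¹) ((ρ g) v) = v := by
        have := LinearMap.congr_fun (hgg' g) v
        simpa using this
      rw [h2, hv (c g x), map_zero]
    have hUne : U ≠ ⊥ := by
      intro hbot
      apply hm
      have : (m : V) ∈ U := by rw [hU, LieSubmodule.mem_toSubmodule]; exact m.2
      rw [hbot, Submodule.mem_bot] at this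
      exact Subtype.ext this
    have hUtop : U = ⊤ := (hirrU U hUstab).resolve_left hUne
    -- So every element of `L` is zero: contradiction with `L ≠ ⊥`.
    apply hne
    rw [LieSubalgebra.eq_bot_iff]
    intro f hf
    ext v
    have : v ∈ U := hUtop ▸ Submodule.mem_top
    rw [hmemU] at this
    simpa using this ⟨f, hf⟩
  -- Assemble the imprimitivity structure from the weight space decomposition.
  set WS : LieModule.Weight k ↥L V → Submodule k V :=
    fun χ => ((LieModule.genWeightSpace V (χ : ↥L → k) : LieSubmodule k ↥L V) : Submodule k V)
    with hWS
  obtain ⟨n, ⟨e⟩⟩ := Finite.exists_equiv_fin (LieModule.Weight k ↥L V)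
  refine ⟨Fin n, WS ∘ e.symm, fun i => ?_, ?_, ?_, ?_, ?_⟩
  · intro hbot
    exact (e.symm i).genWeightSpace_ne_bot'
      ((LieSubmodule.toSubmodule_eq_bot (N := _)).mp hbot)
  · obtain ⟨i, j, hij⟩ := hne2
    exact ⟨e i, e j, fun h => hij (e.injective h)⟩
  · have h1 := LieModule.iSupIndep_genWeightSpace' k ↥L V
    rw [← LieSubmodule.iSupIndep_toSubmodule] at h1
    exact h1.comp e.symm.injective
  · have h1 := LieModule.iSup_genWeightSpace_eq_top' k ↥L V
    rw [← LieSubmodule.toSubmodule_inj, LieSubmodule.iSup_toSubmodule,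
      LieSubmodule.top_toSubmodule] at h1
    have h2 : ⨆ i : Fin n, WS (e.symm i) = ⨆ χ, WS χ := Equiv.iSup_comp e.symm
    exact h2.trans h1
  · intro g i
    set χ : LieModule.Weight k ↥L V := e.symm i with hχ
    have hbot : LieModule.genWeightSpace V (fun x => (χ : ↥L → k) (c g x)) ≠ ⊥ := by
      intro hb
      obtain ⟨v, hv, hv0⟩ := χ.exists_ne_zero
      have hmem : ρ g v ∈ ((LieModule.genWeightSpace V (fun x => (χ : ↥L → k) (c g x)) :
          LieSubmodule k ↥L V) : Submodule k V) :=
        hmap g (χ : ↥L → k) ⟨v, (LieSubmodule.mem_toSubmodule _).mpr hv, rfl⟩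
      rw [hb] at hmem
      apply hv0
      have h0 : (ρ g) v = 0 := by simpa using hmem
      have h3 := LinearMap.congr_fun (hgg' g) v
      simp only [Module.End.mul_apply, Module.End.one_apply] at h3
      rw [h0, map_zero] at h3
      exact h3.symm
    refine ⟨e ⟨fun x => (χ : ↥L → k) (c g x), hbot⟩, ?_⟩
    have h4 : (WS ∘ e.symm) (e ⟨fun x => (χ : ↥L → k) (c g x), hbot⟩)
        = WS ⟨fun x => (χ : ↥L → k) (c g x), hbot⟩ := by
      rw [Function.comp_apply, e.symm_apply_apply]
    rw [h4]
    exact hmap g (χ : ↥L → k)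
end

section
/- Let G be a finite group and V a primitive G-representation over an algebraically closed field of characteristic zero. Then every G-stable Lie subalgebra of sl(V) is semisimple. -/
attribute [local instance] LieRing.ofAssociativeRing

open Module LieAlgebra LieModule

private theorem locnilp {k V : Type*} [Field k] [AddCommGroup V] [Module k V] [FiniteDimensional k V]
    (u : Module.End k V) (h : ∀ v, ∃ n, (u ^ n) v = 0) : IsNilpotent u := by
  have h1 : u.maxGenEigenspace 0 = ⊤ := by
    rw [eq_top_iff]
    intro v _
    rw [Module.End.mem_maxGenEigenspace]
    obtain ⟨n, hn⟩ := h v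
    exact ⟨n, by simpa using hn⟩
  rw [Module.End.maxGenEigenspace_eq_genEigenspace_finrank, Module.End.genEigenspace_nat] at h1
  exact ⟨finrank k V, by simpa using LinearMap.ker_eq_top.mp h1⟩


section PrimAux
variable {k G V : Type*} [Field k] [IsAlgClosed k] [CharZero k] [Group G]
    [AddCommGroup V] [Module k V] [FiniteDimensional k V]
    (ρ : Representation k G V)

private theorem prim_core
    (hirr : ρ.IsIrred) (hprim : ¬ ρ.IsImprimitive)
    (A : LieSubalgebra k (Module.End k V)) (hab : IsLieAbelian A)
    (htr : ∀ f ∈ A, LinearMap.trace k V f = 0)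
    (hstab : ρ.StableLieSubalgebra A) : A = ⊥ := by
  obtain ⟨hV, hirr⟩ := hirr
  haveI : IsLieAbelian A := hab
  haveI hnilA : LieRing.IsNilpotent A := inferInstance
  -- basic representation facts
  have hinv : ∀ g : G, ρ g * ρ g⁻¹ = 1 := fun g => by
    rw [← map_mul, mul_inv_cancel, map_one]
  have hinv' : ∀ g : G, ρ g⁻¹ * ρ g = 1 := fun g => by
    rw [← map_mul, inv_mul_cancel, map_one]
  have hinj : ∀ g : G, Function.Injective (ρ g) := by
    intro g v w h
    have : (ρ g⁻¹ * ρ g) v = (ρ g⁻¹ * ρ g) w := by simp [Module.End.mul_apply, h]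
    simpa [hinv' g] using this
  -- conjugation action on A
  have hmem : ∀ (g : G) (x : A), ρ g⁻¹ * (x : Module.End k V) * ρ g ∈ A := by
    intro g x
    simpa using hstab g⁻¹ x.1 x.2
  set σ : G → A → A := fun g x => ⟨ρ g⁻¹ * (x : Module.End k V) * ρ g, hmem g x⟩ with hσ
  have hcomm : ∀ (g : G) (x : A),
      (x : Module.End k V) * ρ g = ρ g * ((σ g x : A) : Module.End k V) := by
    intro g x
    show (x : Module.End k V) * ρ g = ρ g * (ρ g⁻¹ * (x : Module.End k V) * ρ g)
    rw [← mul_assoc, ← mul_assoc, hinv g, one_mul]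
  have htoEnd : ∀ x : A, toEnd k A V x = (x : Module.End k V) := fun _ => rfl
  -- mapping of weight spaces
  have hmap : ∀ (g : G) (χ : A → k) (v : V), v ∈ genWeightSpace V χ →
      ρ g v ∈ genWeightSpace V (χ ∘ σ g) := by
    intro g χ v hv
    rw [mem_genWeightSpace] at hv ⊢
    intro x
    have key : ∀ n : ℕ, (toEnd k A V x - χ (σ g x) • 1) ^ n * ρ g
        = ρ g * (toEnd k A V (σ g x) - χ (σ g x) • 1) ^ n := by
      intro n
      rw [htoEnd, htoEnd]
      induction n with
      | zero => simp
      | succ n ih =>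
        rw [pow_succ', pow_succ', mul_assoc, ih, ← mul_assoc, ← mul_assoc]
        congr 1
        rw [sub_mul, mul_sub, hcomm g x, smul_mul_assoc, mul_smul_comm, one_mul, mul_one]
    obtain ⟨n, hn⟩ := hv (σ g x)
    refine ⟨n, ?_⟩
    calc ((toEnd k A V x - χ (σ g x) • 1) ^ n) (ρ g v)
        = ((toEnd k A V x - χ (σ g x) • 1) ^ n * ρ g) v := rfl
      _ = (ρ g * (toEnd k A V (σ g x) - χ (σ g x) • 1) ^ n) v := by rw [key]
      _ = ρ g (((toEnd k A V (σ g x) - χ (σ g x) • 1) ^ n) v) := rfl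
      _ = 0 := by rw [hn]; simp
  -- extract a nonzero vector from a nonzero weight space
  have hex : ∀ χ : A → k, genWeightSpace V χ ≠ ⊥ → ∃ v ∈ genWeightSpace V χ, v ≠ 0 := by
    intro χ h
    by_contra hc
    push_neg at hc
    exact h ((LieSubmodule.eq_bot_iff _).mpr hc)
  -- nonemptiness of a mapped weight space
  have hmapne : ∀ (g : G) (χ : A → k), genWeightSpace V χ ≠ ⊥ →
      genWeightSpace V (χ ∘ σ g) ≠ ⊥ := by
    intro g χ h
    obtain ⟨v, hv, hv0⟩ := hex χ h
    intro hbot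
    have := hmap g χ v hv
    rw [hbot, LieSubmodule.mem_bot] at this
    exact hv0 (hinj g (by simpa using this))
  -- only one weight
  haveI hss : Subsingleton (Weight k A V) := by
    by_contra hss
    rw [not_subsingleton_iff_nontrivial] at hss
    apply hprim
    haveI : Fintype (Weight k A V) := Fintype.ofFinite _
    set n := Fintype.card (Weight k A V) with hn
    let e : Fin n ≃ Weight k A V := (Fintype.equivFin _).symm
    refine ⟨Fin n, fun i => (genWeightSpace V (e i : A → k) : Submodule k V),
      ?_, ?_, ?_, ?_, ?_⟩
    · intro i h
      rw [LieSubmodule.toSubmodule_eq_bot] at h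
      exact (e i).genWeightSpace_ne_bot' h
    · obtain ⟨χ₁, χ₂, hne⟩ := hss
      exact ⟨e.symm χ₁, e.symm χ₂, fun h => hne (by simpa using congrArg e h)⟩
    · have h1 := (iSupIndep_genWeightSpace' k A V)
      rw [← LieSubmodule.iSupIndep_toSubmodule] at h1
      exact h1.comp e.injective
    · have h1 := iSup_genWeightSpace_eq_top' k A V
      rw [← LieSubmodule.toSubmodule_inj, LieSubmodule.iSup_toSubmodule,
        LieSubmodule.top_toSubmodule] at h1
      rw [← h1, ← e.iSup_comp]
    · intro g i
      have hne := hmapne g (e i : A → k) (e i).genWeightSpace_ne_bot'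
      refine ⟨e.symm ⟨(e i : A → k) ∘ σ g, hne⟩, ?_⟩
      rintro - ⟨v, hv, rfl⟩
      have := hmap g (e i : A → k) v hv
      simpa using this
  -- the unique weight
  have hwne : Nonempty (Weight k A V) := by
    by_contra hne
    have h1 := iSup_genWeightSpace_eq_top' k A V
    rw [not_nonempty_iff] at hne
    rw [iSup_of_empty] at h1
    obtain ⟨v, hv⟩ := exists_ne (0 : V)
    exact hv (by simpa using (h1 ▸ LieSubmodule.mem_top v : v ∈ (⊥ : LieSubmodule k A V)))
  obtain ⟨χ₀⟩ := hwne
  have htop : genWeightSpace V (χ₀ : A → k) = ⊤ := by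
    have h1 := iSup_genWeightSpace_eq_top' k A V
    haveI : Unique (Weight k A V) := uniqueOfSubsingleton χ₀
    rwa [iSup_unique, Subsingleton.elim default χ₀] at h1
  -- each element is nilpotent
  have hchi : ∀ x : A, (χ₀ : A → k) x = 0 ∧ IsNilpotent (x : Module.End k V) := by
    intro x
    have hloc : ∀ v : V, ∃ n : ℕ,
        (((x : Module.End k V) - (χ₀ : A → k) x • 1) ^ n) v = 0 := by
      intro v
      have hv : v ∈ genWeightSpace V (χ₀ : A → k) := htop ▸ LieSubmodule.mem_top v
      rw [mem_genWeightSpace] at hv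
      obtain ⟨n, hn⟩ := hv x
      exact ⟨n, by rw [htoEnd] at hn; exact hn⟩
    have hnilu : IsNilpotent ((x : Module.End k V) - (χ₀ : A → k) x • 1) :=
      locnilp _ hloc
    have htr0 : LinearMap.trace k V ((x : Module.End k V) - (χ₀ : A → k) x • 1)
        = - ((χ₀ : A → k) x * (finrank k V : k)) := by
      rw [map_sub, htr x.1 x.2, map_smul]
      simp [LinearMap.trace_one, mul_comm]
    have htrn := IsNilpotent.eq_zero (LinearMap.isNilpotent_trace_of_isNilpotent hnilu)
    rw [htrn] at htr0
    have hfr : (finrank k V : k) ≠ 0 := by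
      have : 0 < finrank k V := finrank_pos
      exact_mod_cast Nat.cast_ne_zero.mpr this.ne'
    have hz : (χ₀ : A → k) x = 0 := by
      rcases mul_eq_zero.mp (neg_eq_zero.mp htr0.symm) with h | h
      · exact h
      · exact absurd h hfr
    refine ⟨hz, ?_⟩
    have := hnilu
    rwa [hz, zero_smul, sub_zero] at this
  -- the module is nilpotent; take the trivial submodule
  haveI hnilmod : LieModule.IsNilpotent A V := by
    rw [LieModule.isNilpotent_iff_forall' (R := k)]
    intro x
    rw [htoEnd]
    exact (hchi x).2
  haveI := LieModule.nontrivial_max_triv_of_isNilpotent k A V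
  set U : Submodule k V := (maxTrivSubmodule k A V : Submodule k V) with hU
  have hlie : ∀ (x : A) (v : V), ⁅x, v⁆ = (x : Module.End k V) v := fun _ _ => rfl
  have hUstab : ∀ g : G, ∀ v ∈ U, ρ g v ∈ U := by
    intro g v hv
    rw [hU, LieSubmodule.mem_toSubmodule, mem_maxTrivSubmodule] at hv ⊢
    intro x
    rw [hlie]
    have h0 : ((σ g x : A) : Module.End k V) v = 0 := by
      rw [← hlie]; exact hv (σ g x)
    calc (x : Module.End k V) (ρ g v)
        = ((x : Module.End k V) * ρ g) v := rfl
      _ = (ρ g * ((σ g x : A) : Module.End k V)) v := by rw [hcomm g x]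
      _ = ρ g (((σ g x : A) : Module.End k V) v) := rfl
      _ = 0 := by rw [h0]; simp
  have hUne : U ≠ ⊥ := by
    obtain ⟨u, hu⟩ := exists_ne (0 : maxTrivSubmodule k A V)
    intro hbot
    apply hu
    have : (u : V) ∈ U := u.2
    rw [hbot, Submodule.mem_bot] at this
    exact Subtype.ext this
  have hUtop : U = ⊤ := (hirr U hUstab).resolve_left hUne
  -- conclude
  rw [eq_bot_iff]
  intro f hf
  rw [LieSubalgebra.mem_bot]
  have hzero : ∀ v : V, f v = 0 := by
    intro v
    have hv : v ∈ U := hUtop ▸ Submodule.mem_top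
    rw [hU, LieSubmodule.mem_toSubmodule, mem_maxTrivSubmodule] at hv
    have := hv ⟨f, hf⟩
    rwa [hlie] at this
  exact LinearMap.ext hzero

end PrimAux

section PrimEquiv
variable {k M : Type*} [Field k] [LieRing M] [LieAlgebra k M]

private lemma prim_mapD (e : M ≃ₗ⁅k⁆ M) (I : LieIdeal k M) (n : ℕ) :
    (derivedSeriesOfIdeal k M n I).map e.toLieHom
      = derivedSeriesOfIdeal k M n (I.map e.toLieHom) := by
  induction n with
  | zero => simp [derivedSeriesOfIdeal_zero]
  | succ n ih =>
      rw [derivedSeriesOfIdeal_succ, derivedSeriesOfIdeal_succ,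
        LieIdeal.map_bracket_eq _ e.surjective, ih]

private lemma prim_map_radical_le [IsNoetherian k M] (e : M ≃ₗ⁅k⁆ M) :
    (radical k M).map e.toLieHom ≤ radical k M := by
  rw [← LieIdeal.solvable_iff_le_radical]
  haveI : IsSolvable (radical k M) := radicalIsSolvable k M
  obtain ⟨n, hn⟩ := (isSolvable_iff k _).mp (inferInstance : IsSolvable (radical k M))
  rw [derivedSeries_def, LieIdeal.derivedSeries_eq_bot_iff] at hn
  refine (isSolvable_iff k _).mpr ⟨n, ?_⟩
  rw [derivedSeries_def, LieIdeal.derivedSeries_eq_bot_iff, ← prim_mapD, hn]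
  exact LieIdeal.map_eq_bot_iff.mpr bot_le

private lemma prim_map_radical_eq [IsNoetherian k M] (e : M ≃ₗ⁅k⁆ M) :
    (radical k M).map e.toLieHom = radical k M := by
  refine le_antisymm (prim_map_radical_le e) ?_
  intro x hx
  have h1 : e.symm.toLieHom x ∈ (radical k M).map e.symm.toLieHom := LieIdeal.mem_map hx
  have h2 : e.symm.toLieHom x ∈ radical k M := prim_map_radical_le e.symm h1
  have h3 : e.toLieHom (e.symm.toLieHom x) ∈ (radical k M).map e.toLieHom :=
    LieIdeal.mem_map h2
  have h4 : e.toLieHom (e.symm.toLieHom x) = x := e.apply_symm_apply x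
  rwa [h4] at h3

private lemma prim_map_derivedAbelian [IsNoetherian k M] (e : M ≃ₗ⁅k⁆ M) :
    (derivedAbelianOfIdeal (radical k M)).map e.toLieHom
      = derivedAbelianOfIdeal (radical k M) := by
  unfold derivedAbelianOfIdeal
  cases h : derivedLengthOfIdeal k M (radical k M) with
  | zero => exact LieIdeal.map_eq_bot_iff.mpr bot_le
  | succ n => rw [prim_mapD, prim_map_radical_eq]

end PrimEquiv

/-- If `V` is a primitive representation of a finite group `G` over an
algebraically closed field of characteristic zero, then every `G`-stable Lie subalgebra of
`sl(V)` is semisimple (has trivial radical). -/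
theorem primitive_subalgebras_semisimple
    {k G V : Type*} [Field k] [IsAlgClosed k] [CharZero k] [Group G] [Finite G]
    [AddCommGroup V] [Module k V] [FiniteDimensional k V]
    (ρ : Representation k G V) (hirr : ρ.IsIrred) (hprim : ¬ ρ.IsImprimitive)
    (L : LieSubalgebra k (Module.End k V))
    (hsl : ∀ f ∈ L, LinearMap.trace k V f = 0)
    (hstab : ρ.StableLieSubalgebra L) :
    LieAlgebra.radical k ↥L = ⊥ := by
  have hinv : ∀ g : G, ρ g * ρ g⁻¹ = 1 := fun g => by
    rw [← map_mul, mul_inv_cancel, map_one]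
  have hinv' : ∀ g : G, ρ g⁻¹ * ρ g = 1 := fun g => by
    rw [← map_mul, inv_mul_cancel, map_one]
  -- conjugation as Lie algebra automorphism of End V
  let eg : G → (V ≃ₗ[k] V) := fun g => LinearEquiv.ofLinear (ρ g) (ρ g⁻¹)
    (by rw [← Module.End.mul_eq_comp, hinv g, Module.End.one_eq_id])
    (by rw [← Module.End.mul_eq_comp, hinv' g, Module.End.one_eq_id])
  let cg : G → (Module.End k V ≃ₗ⁅k⁆ Module.End k V) := fun g => (eg g).lieConj
  have hcg : ∀ (g : G) (f : Module.End k V), cg g f = ρ g * f * ρ g⁻¹ := by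
    intro g f
    ext v
    simp [cg, eg, LinearEquiv.lieConj_apply, LinearEquiv.conj_apply, Module.End.mul_apply]
  -- cg g maps L onto L
  have hmapL : ∀ g : G, LieSubalgebra.map (↑(cg g) : Module.End k V →ₗ⁅k⁆ Module.End k V) L = L := by
    intro g
    apply le_antisymm
    · rintro - ⟨f, hf, rfl⟩
      show cg g f ∈ L
      rw [hcg]
      exact hstab g f hf
    · intro f hf
      refine ⟨ρ g⁻¹ * f * ρ g, by simpa using hstab g⁻¹ f hf, ?_⟩
      show cg g _ = f
      rw [hcg]
      rw [← mul_assoc, ← mul_assoc, hinv g, one_mul, mul_assoc, hinv g, mul_one]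
  let Φ : G → (L ≃ₗ⁅k⁆ L) := fun g => (cg g).ofSubalgebras L L (hmapL g)
  have hΦ : ∀ (g : G) (x : L), ((Φ g x : L) : Module.End k V) = ρ g * (x : Module.End k V) * ρ g⁻¹ := by
    intro g x
    rw [← hcg]
    exact (cg g).ofSubalgebras_apply L L (hmapL g) x
  -- the abelian ideal
  haveI : IsNoetherian k L := inferInstance
  set r := radical k L with hr
  set a := derivedAbelianOfIdeal r with ha
  haveI : IsSolvable r := radicalIsSolvable k L
  rw [← abelian_of_solvable_ideal_eq_bot_iff]
  -- the image of a in End V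
  set A : LieSubalgebra k (Module.End k V) :=
    LieSubalgebra.map L.incl (LieIdeal.toLieSubalgebra k L a) with hA
  have hmemA : ∀ f : Module.End k V, f ∈ A ↔ ∃ x : L, x ∈ a ∧ (x : Module.End k V) = f := by
    intro f
    rw [hA]
    constructor
    · rintro ⟨x, hx, rfl⟩
      exact ⟨x, hx, rfl⟩
    · rintro ⟨x, hx, rfl⟩
      exact ⟨x, hx, rfl⟩
  have habelian : IsLieAbelian A := by
    haveI hMa : IsLieAbelian a := abelian_derivedAbelianOfIdeal r
    constructor
    rintro ⟨u, hu⟩ ⟨v, hv⟩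
    obtain ⟨x, hx, rfl⟩ := (hmemA u).mp hu
    obtain ⟨y, hy, rfl⟩ := (hmemA v).mp hv
    have h0 : ⁅(⟨x, hx⟩ : a), (⟨y, hy⟩ : a)⁆ = 0 := trivial_lie_zero _ _ _ _
    have h1 : ⁅x, y⁆ = 0 := by
      have h2 := congrArg a.incl h0
      rw [LieHom.map_lie, map_zero] at h2
      simpa using h2
    apply Subtype.ext
    have h2 : ⁅(x : Module.End k V), (y : Module.End k V)⁆ = ((⁅x, y⁆ : L) : Module.End k V) := rfl
    simp only [LieSubalgebra.coe_bracket]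
    rw [h2, h1]
    rfl
  have htrA : ∀ f ∈ A, LinearMap.trace k V f = 0 := by
    intro f hf
    obtain ⟨x, _, rfl⟩ := (hmemA f).mp hf
    exact hsl _ x.2
  have hstabA : ∀ g : G, ∀ f ∈ A, ρ g * f * ρ g⁻¹ ∈ A := by
    intro g f hf
    obtain ⟨x, hx, rfl⟩ := (hmemA f).mp hf
    have h1 : Φ g x ∈ a := by
      have h2 : (Φ g).toLieHom x ∈ a.map (Φ g).toLieHom := LieIdeal.mem_map hx
      rwa [ha, prim_map_derivedAbelian (Φ g)] at h2
    exact (hmemA _).mpr ⟨Φ g x, h1, (hΦ g x).symm ▸ rfl⟩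
  have hAbot : A = ⊥ := prim_core ρ hirr hprim A habelian htrA hstabA
  -- conclude a = ⊥
  rw [eq_bot_iff]
  intro x hx
  have h1 : (x : Module.End k V) ∈ A := (hmemA _).mpr ⟨x, hx, rfl⟩
  rw [hAbot, LieSubalgebra.mem_bot] at h1
  rw [LieSubmodule.mem_bot]
  exact Subtype.ext h1
end

section
/- Let V be an irreducible representation of a finite group G over an algebraically closed field of characteristic zero such that every non-zero G-submodule of sl(V) has dimension at least dim V. Then V is primitive. -/
attribute [local instance 100] LieRing.ofAssociativeRing

/-- If every nonzero `G`-submodule of `sl(V)` has dimension at least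
`dim V`, for `V` an irreducible representation of a finite group `G` over an algebraically
closed field of characteristic zero, then `V` is primitive. -/
theorem primitivity_criterion
    {k G V : Type*} [Field k] [IsAlgClosed k] [CharZero k] [Group G] [Finite G]
    [AddCommGroup V] [Module k V] [FiniteDimensional k V]
    (ρ : Representation k G V) (hirr : ρ.IsIrred)
    (hdim : ∀ U : Submodule k (Module.End k V),
      (∀ f ∈ U, LinearMap.trace k V f = 0) →
      (∀ g : G, ∀ f ∈ U, ρ g * f * ρ g⁻¹ ∈ U) →
      U ≠ ⊥ → Module.finrank k V ≤ Module.finrank k ↥U) :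
    ¬ ρ.IsImprimitive := by
  rintro ⟨ι, W, hne, ⟨i0, j0, hij0⟩, hindep, hsup, hperm⟩
  classical
  haveI := hirr.1
  -- ι is finite
  haveI : Fintype {i : ι // W i ≠ ⊥} := hindep.fintypeNeBotOfFiniteDimensional
  haveI : Fintype ι :=
    Fintype.ofEquiv {i : ι // W i ≠ ⊥}
      ⟨Subtype.val, fun i => ⟨i, hne i⟩, fun _ => rfl, fun _ => rfl⟩
  set n := Fintype.card ι with hn
  have hn2 : 2 ≤ n := by
    haveI : Nontrivial ι := ⟨i0, j0, hij0⟩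
    exact Fintype.one_lt_card
  have hnV : n ≤ Module.finrank k V := by
    have := hindep.subtype_ne_bot_le_finrank (M := V)
    have hcard : Fintype.card {i : ι // W i ≠ ⊥} = n := by
      rw [hn]
      exact Fintype.card_congr ⟨Subtype.val, fun i => ⟨i, hne i⟩, fun _ => rfl, fun _ => rfl⟩
    omega
  -- index uniqueness
  have hle : ∀ i j : ι, W i ≤ W j → i = j := by
    intro i j h
    by_contra hij
    refine hne i (((hindep j).mono_left h).eq_bot_of_le ?_)
    exact le_iSup₂ (f := fun l (_ : l ≠ j) => W l) i hij
  choose σ hσ using hperm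
  -- internal direct sum and projections
  have hint : DirectSum.IsInternal W :=
    DirectSum.isInternal_submodule_of_iSupIndep_of_iSup_eq_top hindep hsup
  set e := LinearEquiv.ofBijective (DirectSum.coeLinearMap W) hint with he
  set Pr : ι → Module.End k V := fun i =>
    (W i).subtype ∘ₗ (DirectSum.component k ι (fun i => W i) i) ∘ₗ e.symm.toLinearMap with hPr
  have P1 : ∀ i : ι, ∀ v ∈ W i, Pr i v = v := by
    intro i v hv
    show ((DirectSum.component k ι (fun i => W i) i) (e.symm v) : V) = v
    rw [← DirectSum.apply_eq_component, hint.ofBijective_coeLinearMap_of_mem hv]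
  have P2 : ∀ i j : ι, i ≠ j → ∀ v ∈ W i, Pr j v = 0 := by
    intro i j hij v hv
    show ((DirectSum.component k ι (fun i => W i) j) (e.symm v) : V) = 0
    rw [← DirectSum.apply_eq_component, hint.ofBijective_coeLinearMap_of_mem_ne hij hv]
    rfl
  -- the linear map Ψ
  set Ψ : (ι → k) →ₗ[k] Module.End k V :=
    ∑ i : ι, (LinearMap.proj i).smulRight (Pr i) with hΨ
  have Ψval : ∀ (c : ι → k) (i : ι), ∀ v ∈ W i, Ψ c v = c i • v := by
    intro c i v hv
    have : Ψ c = ∑ j : ι, c j • Pr j := by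
      rw [hΨ]; simp [LinearMap.sum_apply]
    rw [this]
    rw [LinearMap.sum_apply]
    rw [Finset.sum_eq_single i]
    · simp [P1 i v hv]
    · intro j _ hji
      simp [P2 i j (Ne.symm hji) v hv]
    · simp
  -- extension principle
  have hext : ∀ f f' : Module.End k V, (∀ i : ι, ∀ v ∈ W i, f v = f' v) → f = f' := by
    intro f f' h
    ext v
    have hv : v ∈ ⨆ i, W i := hsup ▸ Submodule.mem_top
    refine Submodule.iSup_induction (motive := fun x => f x = f' x) W hv (fun i x hx => h i x hx) ?_ ?_
    · simp
    · intro x y hx hy; simp [map_add, hx, hy]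
  have hmem : ∀ f : Module.End k V,
      (∀ i : ι, ∃ c : k, ∀ v ∈ W i, f v = c • v) → f ∈ LinearMap.range Ψ := by
    intro f h
    choose c hc using h
    exact ⟨c, (hext f (Ψ c) fun i v hv => by rw [hc i v hv, Ψval c i v hv]).symm⟩
  -- Ψ is injective
  have hΨinj : Function.Injective Ψ := by
    rw [← LinearMap.ker_eq_bot]
    refine (Submodule.eq_bot_iff _).mpr fun c hc => ?_
    funext i
    obtain ⟨v, hvW, hv0⟩ := Submodule.exists_mem_ne_zero_of_ne_bot (hne i)
    have : Ψ c v = c i • v := Ψval c i v hvW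
    rw [hc] at this
    simp only [LinearMap.zero_apply] at this
    rcases smul_eq_zero.mp this.symm with h | h
    · exact h
    · exact absurd h hv0
  set U' := LinearMap.range Ψ with hU'
  have hU'rank : Module.finrank k ↥U' = n := by
    rw [hU', LinearMap.finrank_range_of_inj hΨinj]
    simp [hn]
  -- identity is in U'
  have hid : (1 : Module.End k V) ∈ U' := by
    refine hmem 1 fun i => ⟨1, fun v _ => ?_⟩
    simp
  set tr' : ↥U' →ₗ[k] k := (LinearMap.trace k V) ∘ₗ U'.subtype with htr'
  have htrsurj : Function.Surjective tr' := by
    intro y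
    have h1 : tr' ⟨1, hid⟩ = (Module.finrank k V : k) := by
      simp [htr', LinearMap.trace_one]
    have hV0 : (Module.finrank k V : k) ≠ 0 := by
      have : 0 < Module.finrank k V := Module.finrank_pos
      exact Nat.cast_ne_zero.mpr (by omega)
    refine ⟨(y / (Module.finrank k V : k)) • ⟨1, hid⟩, ?_⟩
    rw [map_smul, h1, smul_eq_mul, div_mul_cancel₀ _ hV0]
  set U := (LinearMap.ker tr').map U'.subtype with hU
  have hUrank : Module.finrank k ↥U = n - 1 := by
    rw [hU, Submodule.finrank_map_subtype_eq]
    have := LinearMap.finrank_range_add_finrank_ker tr'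
    rw [LinearMap.range_eq_top.mpr htrsurj] at this
    simp only [finrank_top] at this
    have h1 : Module.finrank k k = 1 := Module.finrank_self k
    omega
  have hUmem : ∀ f : Module.End k V,
      f ∈ U ↔ f ∈ U' ∧ LinearMap.trace k V f = 0 := by
    intro f
    constructor
    · rintro ⟨⟨f, hf⟩, hker, rfl⟩
      exact ⟨hf, hker⟩
    · rintro ⟨hf, htr⟩
      exact ⟨⟨f, hf⟩, htr, rfl⟩
  -- trace zero on U
  have htr0 : ∀ f ∈ U, LinearMap.trace k V f = 0 := fun f hf => ((hUmem f).mp hf).2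
  -- G-stability
  have hstab : ∀ g : G, ∀ f ∈ U, ρ g * f * ρ g⁻¹ ∈ U := by
    intro g f hf
    obtain ⟨hf', htrf⟩ := (hUmem f).mp hf
    obtain ⟨c, rfl⟩ := hf'
    refine (hUmem _).mpr ⟨?_, ?_⟩
    · refine hmem _ fun i => ⟨c (σ g⁻¹ i), fun v hv => ?_⟩
      have hmv : ρ g⁻¹ v ∈ W (σ g⁻¹ i) :=
        hσ g⁻¹ i (Submodule.mem_map_of_mem hv)
      have hid : ρ g (ρ g⁻¹ v) = v := by
        have : ρ g * ρ g⁻¹ = 1 := by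
          rw [← map_mul, mul_inv_cancel, map_one]
        calc ρ g (ρ g⁻¹ v) = (ρ g * ρ g⁻¹) v := rfl
        _ = v := by rw [this]; rfl
      calc (ρ g * Ψ c * ρ g⁻¹) v = ρ g (Ψ c (ρ g⁻¹ v)) := rfl
        _ = ρ g (c (σ g⁻¹ i) • (ρ g⁻¹ v)) := by rw [Ψval c _ _ hmv]
        _ = c (σ g⁻¹ i) • ρ g (ρ g⁻¹ v) := by rw [map_smul]
        _ = c (σ g⁻¹ i) • v := by rw [hid]
    · have h1 : ρ g⁻¹ * ρ g = 1 := by rw [← map_mul, inv_mul_cancel, map_one]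
      calc LinearMap.trace k V (ρ g * Ψ c * ρ g⁻¹)
          = LinearMap.trace k V (ρ g⁻¹ * (ρ g * Ψ c)) := LinearMap.trace_mul_comm k _ _
        _ = LinearMap.trace k V (Ψ c) := by rw [← mul_assoc, h1, one_mul]
        _ = 0 := htrf
  -- U is nonzero
  have hUne : U ≠ ⊥ := by
    intro h
    have : Module.finrank k ↥U = 0 := by rw [h]; exact finrank_bot k _
    omega
  -- contradiction
  have := hdim U htr0 hstab hUne
  omega
end

section
/- Let s be a polynomial in k[x_i, x_j] (coefficients possibly involving other variables) of total degree at most 3 in x_i and x_j satisfying x_i ∂s/∂x_j = x_j ∂s/∂x_i. Then s has the form a + c(x_i² + x_j²) where a and c do not involve x_i, x_j. -/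
open MvPolynomial

namespace RotationEqAux

/-- The exponent vector `(a, b)` on `Fin 2`. -/
noncomputable def eab (a b : ℕ) : Fin 2 →₀ ℕ := Finsupp.single 0 a + Finsupp.single 1 b

lemma eab_apply0 (a b : ℕ) : eab a b 0 = a := by
  simp [eab, Finsupp.single_apply]

lemma eab_apply1 (a b : ℕ) : eab a b 1 = b := by
  simp [eab, Finsupp.single_apply]

@[simp] lemma eab_inj (a b a' b' : ℕ) : eab a b = eab a' b' ↔ a = a' ∧ b = b' := by
  constructor
  · intro h
    exact ⟨by rw [← eab_apply0 a b, h, eab_apply0], by rw [← eab_apply1 a b, h, eab_apply1]⟩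
  · rintro ⟨rfl, rfl⟩; rfl

lemma zero_eq_eab : (0 : Fin 2 →₀ ℕ) = eab 0 0 := by simp [eab]

lemma single0_eq (n : ℕ) : Finsupp.single (0 : Fin 2) n = eab n 0 := by simp [eab]

lemma single1_eq (n : ℕ) : Finsupp.single (1 : Fin 2) n = eab 0 n := by simp [eab]

lemma eab_eq_single0_add (a b : ℕ) :
    eab (a + 1) b = Finsupp.single (0 : Fin 2) 1 + eab a b := by
  ext i; fin_cases i <;>
    simp [eab_apply0, eab_apply1, Finsupp.add_apply, Finsupp.single_apply, eab] <;> omega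

lemma eab_eq_single1_add (a b : ℕ) :
    eab a (b + 1) = Finsupp.single (1 : Fin 2) 1 + eab a b := by
  ext i; fin_cases i <;>
    simp [eab_apply0, eab_apply1, Finsupp.add_apply, Finsupp.single_apply, eab] <;> omega

lemma eab_add_single1 (a b : ℕ) :
    eab a b + Finsupp.single (1 : Fin 2) 1 = eab a (b + 1) := by
  rw [eab_eq_single1_add, add_comm]

lemma eab_add_single0 (a b : ℕ) :
    eab a b + Finsupp.single (0 : Fin 2) 1 = eab (a + 1) b := by
  rw [eab_eq_single0_add, add_comm]

lemma sum_eab (a b : ℕ) : ∑ i ∈ (eab a b).support, eab a b i = a + b := by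
  rw [Finset.sum_subset (Finset.subset_univ _)
    (by intro i _ hi; simpa [Finsupp.mem_support_iff] using hi)]
  rw [Fin.sum_univ_two, eab_apply0, eab_apply1]

lemma coeff_pderiv {R : Type*} [CommRing R] (i : Fin 2) (m : Fin 2 →₀ ℕ)
    (p : MvPolynomial (Fin 2) R) :
    coeff m (pderiv i p) = ((m i : R) + 1) * coeff (m + Finsupp.single i 1) p := by
  induction p using MvPolynomial.induction_on' with
  | add p q hp hq => simp [hp, hq, mul_add]
  | monomial u a =>
    rw [pderiv_monomial, coeff_monomial, coeff_monomial]
    by_cases h : u = m + Finsupp.single i 1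
    · subst h
      rw [if_pos (add_tsub_cancel_right _ _), Finsupp.add_apply, Finsupp.single_eq_same]
      simp only [if_true]
      push_cast
      ring
    · rw [if_neg h]
      by_cases h2 : u - Finsupp.single i 1 = m
      · by_cases h3 : u i = 0
        · rw [if_pos h2, h3]; simp
        · exfalso
          apply h
          rw [← h2, tsub_add_cancel_of_le]
          exact Finsupp.single_le_iff.mpr (Nat.one_le_iff_ne_zero.mpr h3)
      · rw [if_neg h2]; ring

end RotationEqAux

open RotationEqAux

/-- If `s` is a polynomial in two variables `x, y` over `R` (the ring of the
other variables, a characteristic-zero domain) of total degree at most `3` in these two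
variables, satisfying `x ∂s/∂y = y ∂s/∂x`, then `s = a + c (x² + y²)` where `a, c` do not
involve `x, y`. -/
theorem solution_of_rotation_equation
    {R : Type*} [CommRing R] [IsDomain R] [CharZero R]
    (s : MvPolynomial (Fin 2) R) (hdeg : s.totalDegree ≤ 3)
    (h : MvPolynomial.X 0 * MvPolynomial.pderiv 1 s
        = MvPolynomial.X 1 * MvPolynomial.pderiv 0 s) :
    ∃ a c : R, s = MvPolynomial.C a
        + MvPolynomial.C c * (MvPolynomial.X 0 ^ 2 + MvPolynomial.X 1 ^ 2) := by
  classical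
  -- coefficient of `x^a y^b` in the LHS of the rotation equation
  have L : ∀ a b : ℕ, coeff (eab (a + 1) b) (X 0 * pderiv 1 s)
      = ((b : R) + 1) * coeff (eab a (b + 1)) s := by
    intro a b
    rw [eab_eq_single0_add, coeff_X_mul, RotationEqAux.coeff_pderiv, eab_apply1, eab_add_single1]
  have L0 : ∀ b : ℕ, coeff (eab 0 b) (X 0 * pderiv 1 s) = 0 := by
    intro b
    rw [coeff_X_mul', if_neg]
    simp [Finsupp.mem_support_iff, eab_apply0]
  have Rl : ∀ a b : ℕ, coeff (eab a (b + 1)) (X 1 * pderiv 0 s)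
      = ((a : R) + 1) * coeff (eab (a + 1) b) s := by
    intro a b
    rw [eab_eq_single1_add, coeff_X_mul, RotationEqAux.coeff_pderiv, eab_apply0, eab_add_single0]
  have R0 : ∀ a : ℕ, coeff (eab a 0) (X 1 * pderiv 0 s) = 0 := by
    intro a
    rw [coeff_X_mul', if_neg]
    simp [Finsupp.mem_support_iff, eab_apply1]
  have H : ∀ m, coeff m (X 0 * pderiv 1 s) = coeff m (X 1 * pderiv 0 s) :=
    fun m => by rw [h]
  have two_ne : (2 : R) ≠ 0 := two_ne_zero
  have three_ne : (3 : R) ≠ 0 := by norm_num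
  -- coefficient relations
  have h01 : coeff (eab 0 1) s = 0 := by
    have := H (eab 1 0); rw [L 0 0, R0 1] at this; simpa using this
  have h10 : coeff (eab 1 0) s = 0 := by
    have := H (eab 0 1); rw [L0 1, Rl 0 0] at this; simpa using this.symm
  have h11 : coeff (eab 1 1) s = 0 := by
    have := H (eab 2 0); rw [L 1 0, R0 2] at this; simpa using this
  have h02 : coeff (eab 0 2) s = coeff (eab 2 0) s := by
    have := H (eab 1 1); rw [L 0 1, Rl 1 0] at this; norm_num at this
    exact this
  have h21 : coeff (eab 2 1) s = 0 := by
    have := H (eab 3 0); rw [L 2 0, R0 3] at this; simpa using this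
  have h12 : coeff (eab 1 2) s = 0 := by
    have := H (eab 0 3); rw [L0 3, Rl 0 2] at this; simpa using this.symm
  have h03 : coeff (eab 0 3) s = 0 := by
    have := H (eab 1 2); rw [L 0 2, Rl 1 1] at this
    rw [h21, mul_zero] at this; norm_num at this
    exact this
  have h30 : coeff (eab 3 0) s = 0 := by
    have := H (eab 2 1); rw [L 1 1, Rl 2 0] at this
    rw [h12, mul_zero] at this; norm_num at this
    exact this
  refine ⟨coeff (eab 0 0) s, coeff (eab 2 0) s, ?_⟩
  ext m
  obtain ⟨a, b, rfl⟩ : ∃ a b, m = eab a b :=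
    ⟨m 0, m 1, by ext i; fin_cases i <;> simp [eab_apply0, eab_apply1]⟩
  by_cases hab : a + b ≤ 3
  · have ha : a ≤ 3 := by omega
    have hb : b ≤ 3 := by omega
    interval_cases a <;> interval_cases b <;>
      simp_all [coeff_C, coeff_C_mul, coeff_X_pow, zero_eq_eab, single0_eq, single1_eq]
  · have hz : coeff (eab a b) s = 0 := by
      apply coeff_eq_zero_of_totalDegree_lt
      rw [sum_eab]; omega
    rw [hz]
    simp only [coeff_add, coeff_C, coeff_C_mul, coeff_X_pow, zero_eq_eab, single0_eq,
      single1_eq, eab_inj]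
    have : ¬(0 = a ∧ 0 = b) := by omega
    have h2 : ¬(2 = a ∧ 0 = b) := by omega
    have h3 : ¬(0 = a ∧ 2 = b) := by omega
    rw [if_neg this, if_neg h2, if_neg h3]
    ring
end

section
/- Let V be an irreducible self-dual representation of a finite group G over an algebraically closed field of characteristic zero such that Sym²(V) and ∧²(V) have no isomorphic G-submodules. Then any G-stable Lie subalgebra of sl(V) whose intersection with the space sl(V)⁻ of anti-symmetric endomorphisms is zero, is commutative. -/
open scoped TensorProduct

attribute [local instance 100] LieRing.ofAssociativeRing

theorem aux_schur {k G V : Type*} [Field k] [IsAlgClosed k] [Monoid G]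
    [AddCommGroup V] [Module k V] [FiniteDimensional k V]
    (ρ : Representation k G V) (hirr : ρ.IsIrred)
    (D : V →ₗ[k] V) (hD : ∀ (g : G) (v : V), D (ρ g v) = ρ g (D v)) :
    ∃ c : k, ∀ v, D v = c • v := by
  obtain ⟨hnt, hsub⟩ := hirr
  haveI := hnt
  obtain ⟨μ, hμ⟩ := Module.End.exists_eigenvalue D
  refine ⟨μ, ?_⟩
  have hU : ∀ g : G, ∀ v ∈ Module.End.eigenspace D μ, ρ g v ∈ Module.End.eigenspace D μ := by
    intro g v hv
    rw [Module.End.mem_eigenspace_iff] at hv ⊢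
    rw [hD g v, hv, map_smul]
  rcases hsub _ hU with h | h
  · exact absurd h hμ
  · intro v
    have hv : v ∈ Module.End.eigenspace D μ := h ▸ Submodule.mem_top
    exact Module.End.mem_eigenspace_iff.mp hv

theorem aux_avg {k E G : Type*} [Field k] [CharZero k] [AddCommGroup E] [Module k E]
    [Group G] [Finite G]
    (c : G → E →ₗ[k] E) (hcmul : ∀ g h x, c g (c h x) = c (g * h) x) (hone : ∀ x, c 1 x = x)
    (K : Submodule k E) (hK : ∀ g, ∀ x ∈ K, c g x ∈ K) :
    ∃ π : E →ₗ[k] E, (∀ x, π x ∈ K) ∧ (∀ x ∈ K, π x = x) ∧ (∀ g x, π (c g x) = c g (π x)) := by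
  haveI := Fintype.ofFinite G
  obtain ⟨K', hK'⟩ := Submodule.exists_isCompl K
  set π0 : E →ₗ[k] E := K.subtype ∘ₗ (K.linearProjOfIsCompl K' hK') with hπ0
  have hπ0K : ∀ x, π0 x ∈ K := fun x => (K.linearProjOfIsCompl K' hK' x).2
  have hπ0id : ∀ x ∈ K, π0 x = x := by
    intro x hx
    have h1 : K.linearProjOfIsCompl K' hK' x = ⟨x, hx⟩ :=
      Submodule.linearProjOfIsCompl_apply_left hK' ⟨x, hx⟩
    simp [hπ0, h1]
  set S : E →ₗ[k] E := ∑ g : G, (c g) ∘ₗ π0 ∘ₗ (c g⁻¹) with hS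
  have hSapp : ∀ x, S x = ∑ g : G, c g (π0 (c g⁻¹ x)) := by
    intro x; rw [hS, LinearMap.sum_apply]; rfl
  have hcard : ((Fintype.card G : k)) ≠ 0 := by
    exact_mod_cast Nat.cast_ne_zero.mpr Fintype.card_ne_zero
  refine ⟨(Fintype.card G : k)⁻¹ • S, ?_, ?_, ?_⟩
  · intro x
    refine Submodule.smul_mem _ _ ?_
    rw [hSapp]
    exact Submodule.sum_mem _ fun g _ => hK g _ (hπ0K _)
  · intro x hx
    have : S x = (Fintype.card G) • x := by
      rw [hSapp]
      have h2 : ∀ g : G, c g (π0 (c g⁻¹ x)) = x := by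
        intro g
        rw [hπ0id _ (hK g⁻¹ x hx), hcmul, mul_inv_cancel, hone]
      simp [h2, Finset.sum_const, Finset.card_univ]
    rw [LinearMap.smul_apply, this, ← Nat.cast_smul_eq_nsmul k, smul_smul,
      inv_mul_cancel₀ hcard, one_smul]
  · intro h x
    have key : S (c h x) = c h (S x) := by
      rw [hSapp, hSapp, map_sum]
      refine Fintype.sum_equiv (Equiv.mulLeft h⁻¹) _ _ ?_
      intro g
      simp only [Equiv.coe_mulLeft, hcmul]
      congr 2
      · group
      · group
    rw [LinearMap.smul_apply, LinearMap.smul_apply, key, map_smul]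

set_option maxHeartbeats 4000000 in
/-- Let `V` be an irreducible self-dual representation of a finite group `G`
over an algebraically closed field of characteristic zero (self-duality being witnessed by a
nondegenerate `G`-invariant bilinear form `B`), such that `Sym²(V)` and `∧²(V)` (realized as
the symmetric and antisymmetric tensors in `V ⊗ V`, i.e. the `±1`-eigenspaces of the swap map)
have no isomorphic `G`-submodules.  Then any `G`-stable Lie subalgebra of `sl(V)` meeting the
space `sl(V)⁻` of anti-symmetric endomorphisms (with respect to `B`) trivially is abelian. -/
theorem subalgebra_meeting_antisymmetric_trivially_is_abelian
    {k G V : Type*} [Field k] [IsAlgClosed k] [CharZero k] [Group G] [Finite G]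
    [AddCommGroup V] [Module k V] [FiniteDimensional k V]
    (ρ : Representation k G V) (hirr : ρ.IsIrred)
    (B : V →ₗ[k] V →ₗ[k] k)
    (hBnd : ∀ v : V, (∀ u : V, B v u = 0) → v = 0)
    (hBinv : ∀ (g : G) (v u : V), B (ρ g v) (ρ g u) = B v u)
    (hnc : ∀ S T : Submodule k (V ⊗[k] V),
      S ≤ LinearMap.ker ((TensorProduct.comm k V V).toLinearMap - LinearMap.id) →
      T ≤ LinearMap.ker ((TensorProduct.comm k V V).toLinearMap + LinearMap.id) →
      ∀ hS : ∀ (g : G), ∀ x ∈ S, TensorProduct.map (ρ g) (ρ g) x ∈ S,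
      (∀ (g : G), ∀ x ∈ T, TensorProduct.map (ρ g) (ρ g) x ∈ T) →
      ∀ e : ↥S ≃ₗ[k] ↥T,
        (∀ (g : G) (x : ↥S),
          (e ⟨TensorProduct.map (ρ g) (ρ g) (x : V ⊗[k] V), hS g x x.2⟩ : V ⊗[k] V)
            = TensorProduct.map (ρ g) (ρ g) (e x : V ⊗[k] V)) →
        S = ⊥)
    (L : LieSubalgebra k (Module.End k V))
    (hsl : ∀ f ∈ L, LinearMap.trace k V f = 0)
    (hstab : ρ.StableLieSubalgebra L)
    (hmeet : ∀ f ∈ L, (∀ v u : V, B (f v) u = - B v (f u)) → f = 0) :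
    IsLieAbelian ↥L := by
  classical
  -- basic facts about B
  have hBinj : ∀ v w : V, (∀ u, B v u = B w u) → v = w := by
    intro v w h
    have h0 : v - w = 0 := hBnd (v - w) (fun u => by rw [map_sub, LinearMap.sub_apply, h u, sub_self])
    exact sub_eq_zero.mp h0
  have hρinv : ∀ (g : G) (v : V), ρ g (ρ g⁻¹ v) = v := by
    intro g v
    have : ρ g * ρ g⁻¹ = 1 := by rw [← map_mul, mul_inv_cancel, map_one]
    calc ρ g (ρ g⁻¹ v) = (ρ g * ρ g⁻¹) v := rfl
      _ = v := by rw [this]; rfl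
  have hρinv' : ∀ (g : G) (v : V), ρ g⁻¹ (ρ g v) = v := by
    intro g v
    have : ρ g⁻¹ * ρ g = 1 := by rw [← map_mul, inv_mul_cancel, map_one]
    calc ρ g⁻¹ (ρ g v) = (ρ g⁻¹ * ρ g) v := rfl
      _ = v := by rw [this]; rfl
  have hBg : ∀ (g : G) (w v : V), B (ρ g w) v = B w (ρ g⁻¹ v) := by
    intro g w v
    conv_lhs => rw [← hρinv g v]
    rw [hBinv]
  -- the Schur scalar c with B u v = c * B v u
  have hinjB : Function.Injective B := fun v w h => hBinj v w (fun u => by rw [h])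
  have hdim : Module.finrank k V = Module.finrank k (Module.Dual k V) :=
    (Subspace.dual_finrank_eq).symm
  set βe : V ≃ₗ[k] Module.Dual k V := LinearMap.linearEquivOfInjective B hinjB hdim with hβedef
  have hβe : ∀ v, βe v = B v := fun v => LinearMap.linearEquivOfInjective_apply hinjB hdim v
  set D : V →ₗ[k] V := βe.symm.toLinearMap ∘ₗ B.flip with hDdef
  have hDchar : ∀ v u, B (D v) u = B u v := by
    intro v u
    have h1 : βe (D v) = B.flip v := by
      rw [hDdef]; exact βe.apply_symm_apply _
    have := congrArg (fun f => f u) h1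
    simpa [hβe] using this
  have hDg : ∀ (g : G) (v : V), D (ρ g v) = ρ g (D v) := by
    intro g v
    apply hBinj
    intro u
    rw [hDchar, hBg g (D v) u, hDchar]
    conv_rhs => rw [← hρinv' g v]
    rw [hBinv g⁻¹ u ((ρ g) v)]
  obtain ⟨c, hc⟩ := aux_schur ρ hirr D hDg
  have hBcomm : ∀ v u : V, B u v = c * B v u := by
    intro v u
    rw [← hDchar v u, hc v, map_smul]
    simp
  have hc2 : c * c = 1 := by
    haveI := hirr.1
    obtain ⟨v, hv⟩ := exists_ne (0 : V)
    have hex : ∃ u, B v u ≠ 0 := by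
      by_contra h
      push_neg at h
      exact hv (hBnd v h)
    obtain ⟨u, hu⟩ := hex
    have h1 : B v u = c * (c * B v u) := by
      conv_lhs => rw [hBcomm u v, hBcomm v u]
    have h2 : (c * c - 1) * B v u = 0 := by ring_nf; linear_combination h1.symm
    rcases mul_eq_zero.mp h2 with h | h
    · exact sub_eq_zero.mp h
    · exact absurd h hu
  -- the tensor picture
  set τ : V ⊗[k] V →ₗ[k] V ⊗[k] V := (TensorProduct.comm k V V).toLinearMap with hτdef
  have hτtmul : ∀ w u : V, τ (w ⊗ₜ[k] u) = u ⊗ₜ[k] w := fun w u => rfl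
  have hττ : ∀ x : V ⊗[k] V, τ (τ x) = x := by
    intro x
    induction x using TensorProduct.induction_on with
    | zero => simp
    | tmul w u => rw [hτtmul, hτtmul]
    | add x y hx hy => rw [map_add, map_add, hx, hy]
  set Φ : (V ⊗[k] V) ≃ₗ[k] Module.End k V :=
    (TensorProduct.congr βe (LinearEquiv.refl k V)).trans (dualTensorHomEquiv k V V) with hΦdef
  have hΦtmul : ∀ w u v : V, Φ (w ⊗ₜ[k] u) v = B w v • u := by
    intro w u v
    rw [hΦdef]
    simp [TensorProduct.congr_tmul, hβe]
  -- conjugation action on End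
  set cg : G → Module.End k V →ₗ[k] Module.End k V := fun g =>
    { toFun := fun A => ρ g * A * ρ g⁻¹
      map_add' := fun A A' => by simp only [mul_add, add_mul]
      map_smul' := fun r A => by
        simp only [RingHom.id_apply, mul_smul_comm, smul_mul_assoc] } with hcgdef
  have hcg : ∀ (g : G) (A : Module.End k V), cg g A = ρ g * A * ρ g⁻¹ := fun _ _ => rfl
  have hcgapp : ∀ (g : G) (A : Module.End k V) (v : V), cg g A v = ρ g (A (ρ g⁻¹ v)) :=
    fun _ _ _ => rfl
  have hcgmul : ∀ (g h : G) (A : Module.End k V), cg g (cg h A) = cg (g * h) A := by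
    intro g h A
    rw [hcg, hcg, hcg, map_mul, mul_inv_rev, map_mul]
    noncomm_ring
  have hcgone : ∀ A : Module.End k V, cg 1 A = A := by
    intro A
    rw [hcg, inv_one, map_one, one_mul, mul_one]
  -- equivariance of Φ
  have hΦg : ∀ (g : G) (x : V ⊗[k] V),
      Φ (TensorProduct.map (ρ g) (ρ g) x) = cg g (Φ x) := by
    intro g x
    induction x using TensorProduct.induction_on with
    | zero => simp
    | tmul w u =>
      apply LinearMap.ext
      intro v
      rw [TensorProduct.map_tmul, hcgapp, hΦtmul, hΦtmul, map_smul, hBg]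
    | add x y hx hy => simp only [map_add, hx, hy]
  have hΦg' : ∀ (g : G) (A : Module.End k V),
      TensorProduct.map (ρ g) (ρ g) (Φ.symm A) = Φ.symm (cg g A) := by
    intro g A
    apply Φ.injective
    rw [hΦg, Φ.apply_symm_apply, Φ.apply_symm_apply]
  -- the transpose operator
  set tm : Module.End k V →ₗ[k] Module.End k V :=
    Φ.toLinearMap ∘ₗ (c • τ) ∘ₗ Φ.symm.toLinearMap with htmdef
  have htmΦ : ∀ x : V ⊗[k] V, tm (Φ x) = Φ (c • τ x) := by
    intro x
    rw [htmdef]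
    simp only [LinearMap.coe_comp, Function.comp_apply, LinearEquiv.coe_coe,
      Φ.symm_apply_apply, LinearMap.smul_apply, map_smul]
  have htm2 : ∀ A : Module.End k V, tm (tm A) = A := by
    intro A
    obtain ⟨x, rfl⟩ : ∃ x, A = Φ x := ⟨Φ.symm A, (Φ.apply_symm_apply A).symm⟩
    rw [htmΦ, htmΦ]
    simp only [map_smul, hττ, smul_smul, hc2, one_smul]
  have htmg : ∀ (g : G) (A : Module.End k V), tm (cg g A) = cg g (tm A) := by
    intro g A
    obtain ⟨x, rfl⟩ : ∃ x, A = Φ x := ⟨Φ.symm A, (Φ.apply_symm_apply A).symm⟩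
    have hτmap : τ (TensorProduct.map (ρ g) (ρ g) x) = TensorProduct.map (ρ g) (ρ g) (τ x) := by
      induction x using TensorProduct.induction_on with
      | zero => simp
      | tmul w u => rw [TensorProduct.map_tmul, hτtmul, hτtmul, TensorProduct.map_tmul]
      | add x y hx hy => rw [map_add, map_add, map_add, hx, hy, map_add]
    rw [← hΦg, htmΦ, htmΦ]
    simp only [map_smul, hτmap, hΦg]
  -- the key adjoint identity
  have hK1 : ∀ (A : Module.End k V) (v u : V), B (tm A v) u = B v (A u) := by
    intro A v u
    obtain ⟨x, rfl⟩ : ∃ x, A = Φ x := ⟨Φ.symm A, (Φ.apply_symm_apply A).symm⟩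
    rw [htmΦ]
    induction x using TensorProduct.induction_on with
    | zero => simp
    | tmul w s =>
      rw [hτtmul]
      rw [map_smul]
      simp only [LinearMap.smul_apply]
      rw [hΦtmul, hΦtmul]
      simp only [map_smul, LinearMap.smul_apply, smul_eq_mul]
      rw [hBcomm s v]
      ring
    | add x y hx hy =>
      simp only [map_add, smul_add, LinearMap.add_apply] at hx hy ⊢
      rw [hx, hy]
  -- symmetric and antisymmetric parts
  have h2k : (2 : k) ≠ 0 := two_ne_zero
  set PL : Module.End k V →ₗ[k] Module.End k V := (2:k)⁻¹ • (LinearMap.id + tm) with hPLdef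
  set QL : Module.End k V →ₗ[k] Module.End k V := (2:k)⁻¹ • (LinearMap.id - tm) with hQLdef
  have hPLapp : ∀ A, PL A = (2:k)⁻¹ • (A + tm A) := by
    intro A; rw [hPLdef]; simp
  have hQLapp : ∀ A, QL A = (2:k)⁻¹ • (A - tm A) := by
    intro A; rw [hQLdef]; simp
  have hPQ : ∀ A, PL A + QL A = A := by
    intro A
    rw [hPLapp, hQLapp, ← smul_add]
    have h1 : A + tm A + (A - tm A) = (2:k) • A := by
      rw [two_smul]; abel
    rw [h1, smul_smul, inv_mul_cancel₀ h2k, one_smul]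
  have htmP : ∀ A, tm (PL A) = PL A := by
    intro A
    rw [hPLapp, map_smul, map_add, htm2]
    module
  have htmQ : ∀ A, tm (QL A) = -QL A := by
    intro A
    rw [hQLapp, map_smul, map_sub, htm2]
    module
  have hPg : ∀ g A, PL (cg g A) = cg g (PL A) := by
    intro g A
    rw [hPLapp, hPLapp, map_smul, map_add, htmg]
  have hQg : ∀ g A, QL (cg g A) = cg g (QL A) := by
    intro g A
    rw [hQLapp, hQLapp, map_smul, map_sub, htmg]
  have hkerP : ∀ A, PL A = 0 → tm A = -A := by
    intro A h
    have h1 := hPQ A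
    rw [h, zero_add] at h1
    rw [← h1, htmQ, h1]
  have hkerQ : ∀ A, QL A = 0 → tm A = A := by
    intro A h
    have h1 := hPQ A
    rw [h, add_zero] at h1
    rw [← h1, htmP, h1]
  have hskewmem : ∀ A : Module.End k V, tm A = -A → ∀ v u, B (A v) u = -B v (A u) := by
    intro A h v u
    have h1 := hK1 A v u
    rw [h] at h1
    simp only [LinearMap.neg_apply, map_neg, LinearMap.neg_apply] at h1
    rw [← h1]
    simp
  have hsymmem : ∀ A : Module.End k V, tm A = A → ∀ v u, B (A v) u = B v (A u) := by
    intro A h v u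
    have h1 := hK1 A v u
    rwa [h] at h1
  -- Maschke argument
  set Lsub : Submodule k (Module.End k V) := L.toSubmodule with hLsubdef
  have hLmem : ∀ A : Module.End k V, A ∈ Lsub ↔ A ∈ L := fun A => Iff.rfl
  have hLg : ∀ g, ∀ A ∈ Lsub, cg g A ∈ Lsub := by
    intro g A hA
    rw [hLmem]
    exact hstab g A hA
  set Ksub : Submodule k (Module.End k V) := Lsub ⊓ LinearMap.ker QL with hKsubdef
  have hKg : ∀ g, ∀ A ∈ Ksub, cg g A ∈ Ksub := by
    intro g A hA
    obtain ⟨hA1, hA2⟩ := Submodule.mem_inf.mp hA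
    refine Submodule.mem_inf.mpr ⟨hLg g A hA1, LinearMap.mem_ker.mpr ?_⟩
    rw [hQg, LinearMap.mem_ker.mp hA2, map_zero]
  obtain ⟨π₀, hπK, hπid, hπg⟩ := aux_avg cg hcgmul hcgone Ksub hKg
  set Wsub : Submodule k (Module.End k V) := Lsub ⊓ LinearMap.ker π₀ with hWsubdef
  have hWL : ∀ A ∈ Wsub, A ∈ Lsub := fun A hA => (Submodule.mem_inf.mp hA).1
  have hWker : ∀ A ∈ Wsub, π₀ A = 0 := fun A hA =>
    LinearMap.mem_ker.mp (Submodule.mem_inf.mp hA).2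
  have hKL : ∀ A ∈ Ksub, A ∈ Lsub := fun A hA => (Submodule.mem_inf.mp hA).1
  have hKker : ∀ A ∈ Ksub, QL A = 0 := fun A hA =>
    LinearMap.mem_ker.mp (Submodule.mem_inf.mp hA).2
  have hWg : ∀ g, ∀ A ∈ Wsub, cg g A ∈ Wsub := by
    intro g A hA
    refine Submodule.mem_inf.mpr ⟨hLg g A (hWL A hA), LinearMap.mem_ker.mpr ?_⟩
    rw [hπg, hWker A hA, map_zero]
  have hwpart : ∀ A ∈ Lsub, A - π₀ A ∈ Wsub := by
    intro A hA
    refine Submodule.mem_inf.mpr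
      ⟨Submodule.sub_mem _ hA (hKL _ (hπK A)), LinearMap.mem_ker.mpr ?_⟩
    rw [map_sub, hπid _ (hπK A), sub_self]
  have hKW0 : ∀ A, A ∈ Ksub → A ∈ Wsub → A = 0 := by
    intro A hK hW
    rw [← hπid A hK]
    exact hWker _ hW
  have hQLdec : ∀ A ∈ Lsub, QL A = QL (A - π₀ A) := by
    intro A hA
    rw [map_sub, hKker _ (hπK A), sub_zero]
  -- the two images and the equivalence between them
  set SE : Submodule k (Module.End k V) := Wsub.map PL with hSEdef
  set TE : Submodule k (Module.End k V) := Wsub.map QL with hTEdef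
  have hSEg : ∀ g, ∀ A ∈ SE, cg g A ∈ SE := by
    rintro g A ⟨w, hw, rfl⟩
    exact ⟨cg g w, hWg g w hw, hPg g w⟩
  have hTEg : ∀ g, ∀ A ∈ TE, cg g A ∈ TE := by
    rintro g A ⟨w, hw, rfl⟩
    exact ⟨cg g w, hWg g w hw, hQg g w⟩
  have hPinjW : ∀ A ∈ Wsub, PL A = 0 → A = 0 := by
    intro A hA h
    exact hmeet A (hWL A hA) (hskewmem A (hkerP A h))
  have hQinjW : ∀ A ∈ Wsub, QL A = 0 → A = 0 := by
    intro A hA h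
    exact hKW0 A (Submodule.mem_inf.mpr ⟨hWL A hA, LinearMap.mem_ker.mpr h⟩) hA
  set p1 : ↥Wsub →ₗ[k] ↥SE :=
    (PL ∘ₗ Wsub.subtype).codRestrict SE (fun w => Submodule.mem_map_of_mem w.2) with hp1def
  set q1 : ↥Wsub →ₗ[k] ↥TE :=
    (QL ∘ₗ Wsub.subtype).codRestrict TE (fun w => Submodule.mem_map_of_mem w.2) with hq1def
  have hp1app : ∀ w : ↥Wsub, (p1 w : Module.End k V) = PL (w : Module.End k V) := fun _ => rfl
  have hq1app : ∀ w : ↥Wsub, (q1 w : Module.End k V) = QL (w : Module.End k V) := fun _ => rfl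
  have hp1bij : Function.Bijective p1 := by
    constructor
    · intro a b hab
      have h1 : PL ((a : Module.End k V) - b) = 0 := by
        rw [map_sub]
        have h := Subtype.ext_iff.mp hab
        rw [hp1app, hp1app] at h
        rw [h, sub_self]
      have h2 : (a : Module.End k V) - b ∈ Wsub := Submodule.sub_mem _ a.2 b.2
      have := hPinjW _ h2 h1
      exact Subtype.ext (sub_eq_zero.mp this)
    · rintro ⟨A, w, hw, rfl⟩
      exact ⟨⟨w, hw⟩, Subtype.ext rfl⟩
  have hq1bij : Function.Bijective q1 := by
    constructor
    · intro a b hab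
      have h1 : QL ((a : Module.End k V) - b) = 0 := by
        rw [map_sub]
        have h := Subtype.ext_iff.mp hab
        rw [hq1app, hq1app] at h
        rw [h, sub_self]
      have h2 : (a : Module.End k V) - b ∈ Wsub := Submodule.sub_mem _ a.2 b.2
      have := hQinjW _ h2 h1
      exact Subtype.ext (sub_eq_zero.mp this)
    · rintro ⟨A, w, hw, rfl⟩
      exact ⟨⟨w, hw⟩, Subtype.ext rfl⟩
  set eP : ↥Wsub ≃ₗ[k] ↥SE := LinearEquiv.ofBijective p1 hp1bij with hePdef
  set eQ : ↥Wsub ≃ₗ[k] ↥TE := LinearEquiv.ofBijective q1 hq1bij with heQdef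
  set eE : ↥SE ≃ₗ[k] ↥TE := eP.symm.trans eQ with heEdef
  have hePapp : ∀ w : ↥Wsub, (eP w : Module.End k V) = PL (w : Module.End k V) := fun w => hp1app w
  have heQapp : ∀ w : ↥Wsub, (eQ w : Module.End k V) = QL (w : Module.End k V) := fun w => hq1app w
  have echar : ∀ (y : ↥SE) (w : Module.End k V) (hw : w ∈ Wsub),
      (y : Module.End k V) = PL w → (eE y : Module.End k V) = QL w := by
    intro y w hw hy
    have h1 : eP ⟨w, hw⟩ = y := Subtype.ext (by rw [hePapp, ← hy])
    have h2 : eP.symm y = ⟨w, hw⟩ := by rw [← h1, eP.symm_apply_apply]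
    have h3 : eE y = eQ (eP.symm y) := rfl
    rw [h3, h2, heQapp]
  have echar' : ∀ (y : ↥TE) (w : Module.End k V) (hw : w ∈ Wsub),
      (y : Module.End k V) = QL w → (eE.symm y : Module.End k V) = PL w := by
    intro y w hw hy
    have h1 : eQ ⟨w, hw⟩ = y := Subtype.ext (by rw [heQapp, ← hy])
    have h2 : eQ.symm y = ⟨w, hw⟩ := by rw [← h1, eQ.symm_apply_apply]
    have h3 : eE.symm y = eP (eQ.symm y) := rfl
    rw [h3, h2, hePapp]
  -- generic facts about transporting along Φ.symm
  have hmemmap : ∀ (M : Submodule k (Module.End k V)) (x : V ⊗[k] V),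
      x ∈ M.map (Φ.symm : Module.End k V →ₗ[k] V ⊗[k] V) ↔ Φ x ∈ M := by
    intro M x
    constructor
    · rintro ⟨A, hA, rfl⟩
      simpa [Φ.apply_symm_apply] using hA
    · intro h
      exact ⟨Φ x, h, Φ.symm_apply_apply x⟩
  have hsubap : ∀ (M : Submodule k (Module.End k V)) (y : ↥M),
      ((Φ.symm.submoduleMap M) y : V ⊗[k] V) = Φ.symm (y : Module.End k V) :=
    fun M y => rfl
  have hSEchar : ∀ x : V ⊗[k] V, Φ x ∈ SE → c • τ x = x := by
    intro x hx
    obtain ⟨w, hw, hΦx⟩ := hx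
    have h1 : tm (Φ x) = Φ x := by rw [← hΦx, htmP]
    rw [htmΦ] at h1
    exact Φ.injective h1
  have hTEchar : ∀ x : V ⊗[k] V, Φ x ∈ TE → c • τ x = -x := by
    intro x hx
    obtain ⟨w, hw, hΦx⟩ := hx
    have h1 : tm (Φ x) = -Φ x := by rw [← hΦx, htmQ]
    have h2 : Φ (c • τ x) = Φ (-x) := by rw [map_neg, ← htmΦ, h1]
    exact Φ.injective h2
  have hSmapg : ∀ (g : G), ∀ x ∈ SE.map (Φ.symm : Module.End k V →ₗ[k] V ⊗[k] V),
      TensorProduct.map (ρ g) (ρ g) x ∈ SE.map (Φ.symm : Module.End k V →ₗ[k] V ⊗[k] V) := by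
    intro g x hx
    rw [hmemmap] at hx ⊢
    rw [hΦg]
    exact hSEg g _ hx
  have hTmapg : ∀ (g : G), ∀ x ∈ TE.map (Φ.symm : Module.End k V →ₗ[k] V ⊗[k] V),
      TensorProduct.map (ρ g) (ρ g) x ∈ TE.map (Φ.symm : Module.End k V →ₗ[k] V ⊗[k] V) := by
    intro g x hx
    rw [hmemmap] at hx ⊢
    rw [hΦg]
    exact hTEg g _ hx
  -- every element of L is symmetric
  have hfin : ∀ A ∈ Lsub, tm A = A := by
    rcases mul_self_eq_one_iff.mp hc2 with hc1 | hc1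
    · -- c = 1 case
      set efull : ↥(SE.map (Φ.symm : Module.End k V →ₗ[k] V ⊗[k] V)) ≃ₗ[k]
          ↥(TE.map (Φ.symm : Module.End k V →ₗ[k] V ⊗[k] V)) :=
        (Φ.symm.submoduleMap SE).symm.trans (eE.trans (Φ.symm.submoduleMap TE)) with hefdef
      have echarfull : ∀ (x : ↥(SE.map (Φ.symm : Module.End k V →ₗ[k] V ⊗[k] V)))
          (w : Module.End k V), w ∈ Wsub →
          (x : V ⊗[k] V) = Φ.symm (PL w) → (efull x : V ⊗[k] V) = Φ.symm (QL w) := by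
        intro x w hw hx
        have hy : (((Φ.symm.submoduleMap SE).symm x) : Module.End k V) = PL w := by
          apply Φ.symm.injective
          rw [← hsubap SE ((Φ.symm.submoduleMap SE).symm x), LinearEquiv.apply_symm_apply]
          exact hx
        have h2 : (eE ((Φ.symm.submoduleMap SE).symm x) : Module.End k V) = QL w :=
          echar _ w hw hy
        show ((Φ.symm.submoduleMap TE) (eE ((Φ.symm.submoduleMap SE).symm x)) : V ⊗[k] V) = _
        rw [hsubap, h2]
      have hSle : SE.map (Φ.symm : Module.End k V →ₗ[k] V ⊗[k] V) ≤
          LinearMap.ker ((TensorProduct.comm k V V).toLinearMap - LinearMap.id) := by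
        intro x hx
        rw [hmemmap] at hx
        have h1 := hSEchar x hx
        rw [hc1, one_smul] at h1
        rw [LinearMap.mem_ker]
        show τ x - x = 0
        rw [h1, sub_self]
      have hTle : TE.map (Φ.symm : Module.End k V →ₗ[k] V ⊗[k] V) ≤
          LinearMap.ker ((TensorProduct.comm k V V).toLinearMap + LinearMap.id) := by
        intro x hx
        rw [hmemmap] at hx
        have h1 := hTEchar x hx
        rw [hc1, one_smul] at h1
        rw [LinearMap.mem_ker]
        show τ x + x = 0
        rw [h1, neg_add_cancel]
      have hequiv : ∀ (g : G) (x : ↥(SE.map (Φ.symm : Module.End k V →ₗ[k] V ⊗[k] V))),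
          (efull ⟨TensorProduct.map (ρ g) (ρ g) (x : V ⊗[k] V), hSmapg g x x.2⟩ : V ⊗[k] V)
            = TensorProduct.map (ρ g) (ρ g) (efull x : V ⊗[k] V) := by
        intro g x
        obtain ⟨w, hw, hx⟩ : ∃ w ∈ Wsub, (x : V ⊗[k] V) = Φ.symm (PL w) := by
          obtain ⟨A, hA, h⟩ := x.2
          obtain ⟨w, hw, rfl⟩ := hA
          exact ⟨w, hw, h.symm⟩
        have h1 : TensorProduct.map (ρ g) (ρ g) (x : V ⊗[k] V) = Φ.symm (PL (cg g w)) := by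
          rw [hx, hΦg', hPg]
        have hE1 := echarfull ⟨_, hSmapg g x x.2⟩ (cg g w) (hWg g w hw) h1
        have hE2 := echarfull x w hw hx
        rw [hE1, hE2, hΦg', hQg]
      have hbot := hnc _ _ hSle hTle hSmapg hTmapg efull hequiv
      intro A hA
      have h1 := hwpart A hA
      have h2 : PL (A - π₀ A) = 0 := by
        have hmem : Φ.symm (PL (A - π₀ A)) ∈
            SE.map (Φ.symm : Module.End k V →ₗ[k] V ⊗[k] V) :=
          Submodule.mem_map_of_mem (Submodule.mem_map_of_mem h1)
        rw [hbot, Submodule.mem_bot] at hmem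
        have h3 := congrArg Φ hmem
        rw [Φ.apply_symm_apply, map_zero] at h3
        exact h3
      have h4 : A - π₀ A = 0 := hPinjW _ h1 h2
      have h5 : A ∈ Ksub := by
        have h6 : A = π₀ A := by
          have := sub_eq_zero.mp h4
          exact this
        rw [h6]
        exact hπK A
      exact hkerQ A (hKker A h5)
    · -- c = -1 case
      set efull : ↥(TE.map (Φ.symm : Module.End k V →ₗ[k] V ⊗[k] V)) ≃ₗ[k]
          ↥(SE.map (Φ.symm : Module.End k V →ₗ[k] V ⊗[k] V)) :=
        (Φ.symm.submoduleMap TE).symm.trans (eE.symm.trans (Φ.symm.submoduleMap SE)) with hefdef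
      have echarfull : ∀ (x : ↥(TE.map (Φ.symm : Module.End k V →ₗ[k] V ⊗[k] V)))
          (w : Module.End k V), w ∈ Wsub →
          (x : V ⊗[k] V) = Φ.symm (QL w) → (efull x : V ⊗[k] V) = Φ.symm (PL w) := by
        intro x w hw hx
        have hy : (((Φ.symm.submoduleMap TE).symm x) : Module.End k V) = QL w := by
          apply Φ.symm.injective
          rw [← hsubap TE ((Φ.symm.submoduleMap TE).symm x), LinearEquiv.apply_symm_apply]
          exact hx
        have h2 : (eE.symm ((Φ.symm.submoduleMap TE).symm x) : Module.End k V) = PL w :=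
          echar' _ w hw hy
        show ((Φ.symm.submoduleMap SE) (eE.symm ((Φ.symm.submoduleMap TE).symm x))
          : V ⊗[k] V) = _
        rw [hsubap, h2]
      have hSle : TE.map (Φ.symm : Module.End k V →ₗ[k] V ⊗[k] V) ≤
          LinearMap.ker ((TensorProduct.comm k V V).toLinearMap - LinearMap.id) := by
        intro x hx
        rw [hmemmap] at hx
        have h1 := hTEchar x hx
        rw [hc1, neg_smul, one_smul, neg_inj] at h1
        rw [LinearMap.mem_ker]
        show τ x - x = 0
        rw [h1, sub_self]
      have hTle : SE.map (Φ.symm : Module.End k V →ₗ[k] V ⊗[k] V) ≤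
          LinearMap.ker ((TensorProduct.comm k V V).toLinearMap + LinearMap.id) := by
        intro x hx
        rw [hmemmap] at hx
        have h1 := hSEchar x hx
        rw [hc1, neg_smul, one_smul] at h1
        have h2 : τ x = -x := neg_eq_iff_eq_neg.mp h1
        rw [LinearMap.mem_ker]
        show τ x + x = 0
        rw [h2, neg_add_cancel]
      have hequiv : ∀ (g : G) (x : ↥(TE.map (Φ.symm : Module.End k V →ₗ[k] V ⊗[k] V))),
          (efull ⟨TensorProduct.map (ρ g) (ρ g) (x : V ⊗[k] V), hTmapg g x x.2⟩ : V ⊗[k] V)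
            = TensorProduct.map (ρ g) (ρ g) (efull x : V ⊗[k] V) := by
        intro g x
        obtain ⟨w, hw, hx⟩ : ∃ w ∈ Wsub, (x : V ⊗[k] V) = Φ.symm (QL w) := by
          obtain ⟨A, hA, h⟩ := x.2
          obtain ⟨w, hw, rfl⟩ := hA
          exact ⟨w, hw, h.symm⟩
        have h1 : TensorProduct.map (ρ g) (ρ g) (x : V ⊗[k] V) = Φ.symm (QL (cg g w)) := by
          rw [hx, hΦg', hQg]
        have hE1 := echarfull ⟨_, hTmapg g x x.2⟩ (cg g w) (hWg g w hw) h1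
        have hE2 := echarfull x w hw hx
        rw [hE1, hE2, hΦg', hPg]
      have hbot := hnc _ _ hSle hTle hTmapg hSmapg efull hequiv
      intro A hA
      have h1 := hwpart A hA
      have h2 : QL (A - π₀ A) = 0 := by
        have hmem : Φ.symm (QL (A - π₀ A)) ∈
            TE.map (Φ.symm : Module.End k V →ₗ[k] V ⊗[k] V) :=
          Submodule.mem_map_of_mem (Submodule.mem_map_of_mem h1)
        rw [hbot, Submodule.mem_bot] at hmem
        have h3 := congrArg Φ hmem
        rw [Φ.apply_symm_apply, map_zero] at h3
        exact h3
      have h4 : QL A = 0 := by rw [hQLdec A hA, h2]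
      exact hkerQ A h4
  -- conclusion : L is abelian
  constructor
  intro x y
  have hzero : ⁅(x : Module.End k V), (y : Module.End k V)⁆ = 0 := by
    apply hmeet _ (L.lie_mem x.2 y.2)
    intro v u
    have hfx := hsymmem _ (hfin _ x.2)
    have hfy := hsymmem _ (hfin _ y.2)
    rw [Ring.lie_def]
    simp only [LinearMap.sub_apply, Module.End.mul_apply, map_sub]
    rw [hfx ((y : Module.End k V) v) u, hfy ((x : Module.End k V) v) u,
      hfy v ((x : Module.End k V) u), hfx v ((y : Module.End k V) u)]
    ring
  have : (↑(⁅x, y⁆ : ↥L) : Module.End k V) = 0 := by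
    rw [LieSubalgebra.coe_bracket]
    exact hzero
  exact Subtype.ext this
end

section
/- If M is a finitely generated graded module over a graded polynomial ring and b_{i₀,j} = 0 for all j ≤ j₀, then b_{i,j} = 0 for all i ≥ i₀ and all j ≤ j₀. -/
open MvPolynomial

lemma aux_homog_zero {kk : Type*} [CommSemiring kk] {n : ℕ} {w : Fin n → ℕ}
    (hw : ∀ s, 0 < w s) {p : MvPolynomial (Fin n) kk}
    (hp : IsWeightedHomogeneous w p 0) (hc : constantCoeff p = 0) : p = 0 := by
  ext d
  by_cases hd : d = 0
  · subst hd
    simpa [MvPolynomial.constantCoeff_eq] using hc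
  · by_contra hne
    have hw0 := hp hne
    obtain ⟨s, hs⟩ := Finsupp.ne_iff.mp hd
    have : d s ≤ Finsupp.weight w d := Finsupp.le_weight w (hw s).ne' d
    rw [hw0] at this
    simp at hs
    omega

/-- Let `P` be a graded polynomial ring over a field `k` (finitely many
variables, each of positive degree) and let `M` be a finitely generated graded `P`-module,
presented here via a minimal graded free resolution
`⋯ → F₂ → F₁ → F₀ (→ M → 0)`, where `F i` is free with `rank i` generators, the generator `c`
of `F i` sitting in degree `deg i c`, and the differential `F (i+1) → F i` is given by the
matrix `A i` of homogeneous entries; minimality means all entries of the differentials have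
vanishing constant term.  The graded Betti number `b_{i,j}` is the number of generators of
`F i` of degree `i + j`.  If `b_{i₀, j} = 0` for all `j ≤ j₀`, then `b_{i,j} = 0` for all
`i ≥ i₀` and all `j ≤ j₀`. -/
theorem betti_vanishing_propagates
    {kk : Type*} [Field kk] {n : ℕ} (w : Fin n → ℕ) (hw : ∀ s, 0 < w s)
    (rank : ℕ → ℕ) (deg : (i : ℕ) → Fin (rank i) → ℤ)
    (A : (i : ℕ) → Matrix (Fin (rank i)) (Fin (rank (i + 1))) (MvPolynomial (Fin n) kk))
    -- the differentials are graded (degree-zero) maps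
    (hgraded : ∀ (i : ℕ) (r : Fin (rank i)) (c : Fin (rank (i + 1))),
      IsWeightedHomogeneous w (A i r c) ((deg (i + 1) c - deg i r).toNat) ∧
      (deg (i + 1) c < deg i r → A i r c = 0))
    -- the complex is exact at every `F i` with `i ≥ 1` (so it is a free resolution of
    -- `M := coker (F₁ → F₀)`)
    (hexact : ∀ i : ℕ,
      LinearMap.range (A (i + 1)).mulVecLin = LinearMap.ker (A i).mulVecLin)
    -- minimality
    (hmin : ∀ (i : ℕ) (r : Fin (rank i)) (c : Fin (rank (i + 1))),
      constantCoeff (A i r c) = 0)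
    (i₀ : ℕ) (j₀ : ℤ)
    (h : ∀ j : ℤ, j ≤ j₀ → Nat.card {r : Fin (rank i₀) // deg i₀ r = (i₀ : ℤ) + j} = 0) :
    ∀ i : ℕ, i₀ ≤ i → ∀ j : ℤ, j ≤ j₀ →
      Nat.card {r : Fin (rank i) // deg i r = (i : ℤ) + j} = 0 := by
  suffices H : ∀ i : ℕ, i₀ ≤ i → ∀ r : Fin (rank i), (i : ℤ) + j₀ < deg i r by
    intro i hi j hj
    rw [Nat.card_eq_zero]
    left
    constructor
    rintro ⟨r, hr⟩
    have := H i hi r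
    omega
  intro i hi
  induction i, hi using Nat.le_induction with
  | base =>
    intro r
    by_contra hnot
    push_neg at hnot
    have hj : deg i₀ r - i₀ ≤ j₀ := by omega
    have := h (deg i₀ r - (i₀ : ℤ)) hj
    rw [Nat.card_eq_zero] at this
    rcases this with hE | hI
    · exact hE.elim' ⟨r, by omega⟩
    · exact absurd Subtype.finite hI.not_finite
  | succ i hi IH =>
    intro c
    by_contra hnot
    push_neg at hnot
    -- the column of `A i` at `c` is zero
    have hcol : ∀ r : Fin (rank i), A i r c = 0 := by
      intro r
      have hr := IH r
      rcases lt_or_eq_of_le (by omega : deg (i + 1) c ≤ deg i r) with hlt | heq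
      · exact (hgraded i r c).2 hlt
      · have h0 : ((deg (i + 1) c - deg i r).toNat) = 0 := by omega
        exact aux_homog_zero hw (h0 ▸ (hgraded i r c).1) (hmin i r c)
    -- so the basis vector at `c` is in the kernel, hence in the range
    have hker : Pi.single c (1 : MvPolynomial (Fin n) kk) ∈
        LinearMap.ker (A i).mulVecLin := by
      rw [LinearMap.mem_ker, Matrix.mulVecLin_apply, Matrix.mulVec_single]
      funext r
      simp [hcol r]
    rw [← hexact i] at hker
    obtain ⟨v, hv⟩ := hker
    have hv' : (A (i + 1)).mulVec v c = 1 := by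
      rw [Matrix.mulVecLin_apply] at hv
      have := congrFun hv c
      simpa using this
    have : constantCoeff ((A (i + 1)).mulVec v c) = (0 : kk) := by
      simp only [Matrix.mulVec, dotProduct, map_sum, map_mul]
      apply Finset.sum_eq_zero
      intro d _
      rw [hmin (i + 1) c d, zero_mul]
    rw [hv'] at this
    simp at this
end
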